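/- arXiv:2201.11426 — 4 statements merged into one kernel-verified Lean document; each statement's English description precedes it below -/
import Mathlib

section
/- Let (T, T̃) be a joint pair of abstract Friedrichs operators on a complex Hilbert space H. Then T and T̃ are closable, the closures T̄ and closure(T̃) have the same domain W₀, the adjoints T̃* and T* have the same domain W, the graph norms ‖·‖_{T̃*} and ‖·‖_{T*} are equivalent on W, the restriction of the closure of T + T̃ to W equals T̃* + T*, and (T̄, closure(T̃)) is again a joint pair of abstract Friedrichs operators. -/
open LinearPMap
open scoped LinearPMap

noncomputable section

variable {H : Type*} [NormedAddCommGroup H] [InnerProductSpace ℂ H] [CompleteSpace H]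

local notation "⟪" x ", " y "⟫" => @inner ℂ _ _ x y

/-- The (closure of the) graph of `T` is contained in the "weak formal adjoint" closed set. -/
lemma aux_closure_subset (T Tt : H →ₗ.[ℂ] H) (h : T.IsFormalAdjoint Tt) :
    (T.graph.topologicalClosure : Set (H × H)) ⊆
      {p : H × H | ∀ ψ : Tt.domain, ⟪p.2, (ψ : H)⟫ = ⟪p.1, Tt ψ⟫} := by
  rw [Submodule.topologicalClosure_coe]
  refine closure_minimal ?_ ?_
  · rintro p hp ψ
    obtain ⟨y, hy1, hy2⟩ := T.mem_graph_iff.mp hp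
    rw [← hy1, ← hy2]
    exact h y ψ
  · have : {p : H × H | ∀ ψ : Tt.domain, ⟪p.2, (ψ : H)⟫ = ⟪p.1, Tt ψ⟫} =
        ⋂ ψ : Tt.domain, {p : H × H | ⟪p.2, (ψ : H)⟫ = ⟪p.1, Tt ψ⟫} := by
      ext p; simp [Set.mem_iInter]
    rw [this]
    refine isClosed_iInter fun ψ => isClosed_eq ?_ ?_
    · exact (continuous_snd.inner continuous_const)
    · exact (continuous_fst.inner continuous_const)

lemma aux_closable (T Tt : H →ₗ.[ℂ] H) (hd : Dense (Tt.domain : Set H))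
    (h : T.IsFormalAdjoint Tt) : T.IsClosable := by
  refine ⟨T.graph.topologicalClosure.toLinearPMap, (Submodule.toLinearPMap_graph_eq _ ?_).symm⟩
  rintro ⟨x, y⟩ hxy (rfl : x = 0)
  have := aux_closure_subset T Tt h hxy
  refine hd.eq_zero_of_inner_left ℂ fun ψ hψ => ?_
  rw [this ⟨ψ, hψ⟩, inner_zero_left]

set_option linter.unusedSectionVars false

lemma aux_sq_ineq (c a b t : ℝ) (hc : 0 ≤ c) (ha : 0 ≤ a) (hb : 0 ≤ b) (ht : 0 ≤ t)
    (h : t ≤ c * a + b) : a ^ 2 + t ^ 2 ≤ (2 + 2 * c ^ 2) * (a ^ 2 + b ^ 2) := by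
  nlinarith [mul_self_le_mul_self ht h, sq_nonneg (c * a - b), sq_nonneg b,
    mul_nonneg (mul_nonneg hc hc) (mul_self_nonneg b)]

lemma aux_graph_closure {T Tt : H →ₗ.[ℂ] H} (hd : Dense (Tt.domain : Set H))
    (h : T.IsFormalAdjoint Tt) {p : H × H} (hp : p ∈ T.closure.graph) (ψ : Tt.domain) :
    ⟪p.2, (ψ : H)⟫ = ⟪p.1, Tt ψ⟫ := by
  have hcl := aux_closable T Tt hd h
  have := hcl.graph_closure_eq_closure_graph
  exact aux_closure_subset T Tt h (by rw [this]; exact hp) ψ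

lemma aux_adjoint_transfer (T Tt : H →ₗ.[ℂ] H) (hdT : Dense (T.domain : Set H))
    (hdTt : Dense (Tt.domain : Set H)) (A : H →L[ℂ] H)
    (hsa : ∀ x y : H, ⟪A x, y⟫ = ⟪x, A y⟫)
    (hA : ∀ ψ : Tt.domain, ∃ hψ : (ψ : H) ∈ T.domain, A (ψ : H) = T ⟨ψ, hψ⟩ + Tt ψ) :
    ∀ u : (T†).domain, ∃ hu : (u : H) ∈ (Tt†).domain, (Tt†) ⟨u, hu⟩ = A u - (T†) u := by
  intro u
  have key : ∀ ψ : Tt.domain, ⟪A u - (T†) u, (ψ : H)⟫ = ⟪(u : H), Tt ψ⟫ := by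
    intro ψ
    obtain ⟨hψ, hAψ⟩ := hA ψ
    rw [inner_sub_left, hsa, adjoint_isFormalAdjoint hdT u ⟨ψ, hψ⟩, hAψ, inner_add_right]
    ring
  have hu : (u : H) ∈ (Tt†).domain := mem_adjoint_domain_of_exists _ ⟨_, key⟩
  exact ⟨hu, adjoint_apply_eq hdTt _ key⟩

lemma aux_closure_transfer (T Tt : H →ₗ.[ℂ] H) (hT : T.IsClosable) (hTt : Tt.IsClosable)
    (A : H →L[ℂ] H)
    (hA : ∀ φ : T.domain, ∃ hφ : (φ : H) ∈ Tt.domain, A (φ : H) = T φ + Tt ⟨φ, hφ⟩) :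
    ∀ x : T.closure.domain, ∃ hx : (x : H) ∈ Tt.closure.domain,
      Tt.closure ⟨x, hx⟩ = A x - T.closure x := by
  intro x
  have hmem : ((x : H), A x - T.closure x) ∈ Tt.closure.graph := by
    have hset : (T.closure.graph : Set (H × H)) ⊆
        {p : H × H | (p.1, A p.1 - p.2) ∈ Tt.closure.graph} := by
      rw [← hT.graph_closure_eq_closure_graph, Submodule.topologicalClosure_coe]
      refine closure_minimal ?_ ?_
      · rintro p hp
        obtain ⟨y, hy1, hy2⟩ := T.mem_graph_iff.mp hp
        obtain ⟨hφ, hAφ⟩ := hA y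
        have : (p.1, A p.1 - p.2) = ((((⟨y, hφ⟩ : Tt.domain)) : H), Tt ⟨y, hφ⟩) := by
          rw [← hy1, ← hy2]
          simp only [Prod.mk.injEq]
          exact ⟨trivial, by rw [hAφ]; abel⟩
        rw [Set.mem_setOf_eq, this]
        exact le_graph_of_le (le_closure Tt) (Tt.mem_graph ⟨y, hφ⟩)
      · have : IsClosed (Tt.closure.graph : Set (H × H)) := hTt.closure_isClosed
        exact this.preimage (continuous_fst.prodMk
          ((A.continuous.comp continuous_fst).sub continuous_snd))
    exact hset (T.closure.mem_graph x)
  obtain ⟨y, hy1, hy2⟩ := Tt.closure.mem_graph_iff.mp hmem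
  simp only at hy1 hy2
  refine ⟨hy1 ▸ y.2, ?_⟩
  rw [← hy2]
  congr 1
  exact Subtype.ext hy1.symm


/-- Conditions (T1)–(T2) for a pair of operators with common dense domain. -/
structure IsPreFriedrichsPair (T Tt : H →ₗ.[ℂ] H) : Prop where
  dom_eq : T.domain = Tt.domain
  dense' : Dense (T.domain : Set H)
  t1 : ∀ (φ : T.domain) (ψ : Tt.domain), ⟪T φ, (ψ : H)⟫ = ⟪(φ : H), Tt ψ⟫
  t2 : ∃ c : ℝ, 0 < c ∧ ∀ φ : (T + Tt).domain, ‖(T + Tt) φ‖ ≤ c * ‖(φ : H)‖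

/-- A joint pair of abstract Friedrichs operators: (T1)–(T3). -/
structure IsFriedrichsPair (T Tt : H →ₗ.[ℂ] H) extends IsPreFriedrichsPair T Tt : Prop where
  t3 : ∃ μ₀ : ℝ, 0 < μ₀ ∧ ∀ φ : (T + Tt).domain,
        2 * μ₀ * ‖(φ : H)‖ ^ 2 ≤ (⟪(T + Tt) φ, (φ : H)⟫).re

/-- For a joint pair of abstract Friedrichs operators `(T, T̃)`: both operators
are closable, the closures have the same domain `W₀`, the adjoints `T̃*` and `T*` have the same
domain `W`, the graph norms of `T̃*` and `T*` are equivalent on `W`, the restriction of the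
closure of `T + T̃` to `W` equals `T̃* + T*`, and the pair of closures is again a joint pair of
abstract Friedrichs operators. -/
theorem statement1 (T Tt : H →ₗ.[ℂ] H) (hF : IsFriedrichsPair T Tt) :
    T.IsClosable ∧ Tt.IsClosable ∧
    T.closure.domain = Tt.closure.domain ∧
    (Tt†).domain = (T†).domain ∧
    (∃ c₁ : ℝ, 0 < c₁ ∧ ∃ c₂ : ℝ, 0 < c₂ ∧
      ∀ (u : (Tt†).domain) (v : (T†).domain), (u : H) = (v : H) →
        ‖(u : H)‖ ^ 2 + ‖(Tt†) u‖ ^ 2 ≤ c₁ * (‖(u : H)‖ ^ 2 + ‖(T†) v‖ ^ 2) ∧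
        ‖(u : H)‖ ^ 2 + ‖(T†) v‖ ^ 2 ≤ c₂ * (‖(u : H)‖ ^ 2 + ‖(Tt†) u‖ ^ 2)) ∧
    (T + Tt).closure.domRestrict (Tt†).domain = Tt† + T† ∧
    IsFriedrichsPair T.closure Tt.closure := by
  obtain ⟨c, hc, ht2⟩ := hF.t2
  obtain ⟨μ₀, hμ₀, ht3⟩ := hF.t3
  have hdom := hF.dom_eq
  have hdT : Dense (T.domain : Set H) := hF.dense'
  have hdTt : Dense (Tt.domain : Set H) := by rw [← hdom]; exact hdT
  have hfa : T.IsFormalAdjoint Tt := hF.t1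
  have hfa' : Tt.IsFormalAdjoint T := hfa.symm
  set S := T + Tt with hS
  have hSdom : S.domain = T.domain := by rw [hS, add_domain, hdom, inf_idem]
  have hdS : Dense (S.domain : Set H) := by rw [hSdom]; exact hdT
  -- symmetry of S
  have hSsym : ∀ φ ψ : S.domain, ⟪S φ, (ψ : H)⟫ = ⟪(φ : H), S ψ⟫ := by
    intro φ ψ
    rw [LinearPMap.add_apply, LinearPMap.add_apply, inner_add_left, inner_add_right,
      hfa ⟨φ, φ.2.1⟩ ⟨ψ, ψ.2.2⟩, hfa' ⟨φ, φ.2.2⟩ ⟨ψ, ψ.2.1⟩]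
    ring
  -- the bounded extension A of S
  have hbound : ∀ φ : S.domain, ‖S.toFun φ‖ ≤ c * ‖φ‖ := fun φ => ht2 φ
  set Scont : S.domain →L[ℂ] H := LinearMap.mkContinuous S.toFun c hbound with hScont
  set A : H →L[ℂ] H := Scont.extend (Submodule.subtypeL S.domain)
    with hAdef
  have hAS : ∀ φ : S.domain, A (φ : H) = S φ := fun φ =>
    ContinuousLinearMap.extend_eq (f := Scont) hdS.denseRange_val
      isUniformEmbedding_subtype_val.isUniformInducing φ
  -- self-adjointness of A
  have hsa : ∀ x y : H, ⟪A x, y⟫ = ⟪x, A y⟫ := by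
    have step1 : ∀ (φ : S.domain) (y : H), ⟪A (φ : H), y⟫ = ⟪(φ : H), A y⟫ := by
      intro φ
      have := Continuous.ext_on hdS
        (continuous_const.inner A.continuous : Continuous fun y : H => ⟪(φ : H), A y⟫)
        (continuous_const.inner continuous_id : Continuous fun y : H => ⟪A (φ : H), y⟫)
        (fun y hy => by
          rw [hAS φ, hAS ⟨y, hy⟩]
          exact (hSsym φ ⟨y, hy⟩).symm)
      intro y
      exact (congrFun this y).symm
    intro x y
    have := Continuous.ext_on hdS
      ((A.continuous.inner continuous_const) : Continuous fun x : H => ⟪A x, y⟫)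
      ((continuous_id.inner continuous_const) : Continuous fun x : H => ⟪x, A y⟫)
      (fun x hx => step1 ⟨x, hx⟩ y)
    exact congrFun this x
  -- pointwise values of A on the common domain
  have hAval : ∀ (x : H) (hx1 : x ∈ T.domain) (hx2 : x ∈ Tt.domain),
      A x = T ⟨x, hx1⟩ + Tt ⟨x, hx2⟩ := by
    intro x hx1 hx2
    have hxS : x ∈ S.domain := ⟨hx1, hx2⟩
    rw [show A x = S ⟨x, hxS⟩ from hAS ⟨x, hxS⟩, LinearPMap.add_apply]
  -- norm bound for A
  have hAnorm : ∀ x : H, ‖A x‖ ≤ c * ‖x‖ := by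
    have hsub : (S.domain : Set H) ⊆ {x : H | ‖A x‖ ≤ c * ‖x‖} := fun x hx => by
      rw [Set.mem_setOf_eq, hAS ⟨x, hx⟩]
      exact ht2 ⟨x, hx⟩
    have hclosed : _root_.IsClosed {x : H | ‖A x‖ ≤ c * ‖x‖} :=
      isClosed_le (A.continuous.norm) (continuous_const.mul continuous_norm)
    intro x
    have : x ∈ closure (S.domain : Set H) := by rw [hdS.closure_eq]; trivial
    exact closure_minimal hsub hclosed this
  -- closability
  have hTcl : T.IsClosable := aux_closable T Tt hdTt hfa
  have hTtcl : Tt.IsClosable := aux_closable Tt T hdT hfa'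
  -- closure domain transfers
  have htrans : ∀ x : T.closure.domain, ∃ hx : (x : H) ∈ Tt.closure.domain,
      Tt.closure ⟨x, hx⟩ = A x - T.closure x :=
    aux_closure_transfer T Tt hTcl hTtcl A
      (fun φ => ⟨hdom ▸ φ.2, hAval φ φ.2 (hdom ▸ φ.2)⟩)
  have htrans' : ∀ x : Tt.closure.domain, ∃ hx : (x : H) ∈ T.closure.domain,
      T.closure ⟨x, hx⟩ = A x - Tt.closure x :=
    aux_closure_transfer Tt T hTtcl hTcl A
      (fun φ => ⟨hdom.symm ▸ φ.2, by
        rw [hAval φ (hdom.symm ▸ φ.2) φ.2]; exact add_comm _ _⟩)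
  have hW0 : T.closure.domain = Tt.closure.domain := by
    apply le_antisymm
    · intro x hx
      exact (htrans ⟨x, hx⟩).1
    · intro x hx
      exact (htrans' ⟨x, hx⟩).1
  -- adjoint domain transfers
  have hadj : ∀ u : (T†).domain, ∃ hu : (u : H) ∈ (Tt†).domain,
      (Tt†) ⟨u, hu⟩ = A u - (T†) u :=
    aux_adjoint_transfer T Tt hdT hdTt A hsa
      (fun ψ => ⟨hdom.symm ▸ ψ.2, hAval ψ (hdom.symm ▸ ψ.2) ψ.2⟩)
  have hadj' : ∀ u : (Tt†).domain, ∃ hu : (u : H) ∈ (T†).domain,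
      (T†) ⟨u, hu⟩ = A u - (Tt†) u :=
    aux_adjoint_transfer Tt T hdTt hdT A hsa
      (fun ψ => ⟨hdom ▸ ψ.2, by rw [hAval ψ ψ.2 (hdom ▸ ψ.2)]; exact add_comm _ _⟩)
  have hW : (Tt†).domain = (T†).domain := by
    apply le_antisymm
    · intro u hu
      exact (hadj' ⟨u, hu⟩).1
    · intro u hu
      exact (hadj ⟨u, hu⟩).1
  -- S is closable and its closure is A (everywhere defined)
  have hScl : S.IsClosable := aux_closable S S hdS hSsym
  have hSgraph : ∀ x : H, (x, A x) ∈ S.closure.graph := by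
    have hsub : (S.domain : Set H) ⊆ {x : H | (x, A x) ∈ S.closure.graph} := fun x hx => by
      rw [Set.mem_setOf_eq, hAS ⟨x, hx⟩]
      exact le_graph_of_le (le_closure S) (S.mem_graph ⟨x, hx⟩)
    have hclosed : _root_.IsClosed {x : H | (x, A x) ∈ S.closure.graph} := by
      have : _root_.IsClosed (S.closure.graph : Set (H × H)) := hScl.closure_isClosed
      exact this.preimage (continuous_id.prodMk A.continuous)
    intro x
    have : x ∈ closure (S.domain : Set H) := by rw [hdS.closure_eq]; trivial
    exact closure_minimal hsub hclosed this
  have hSdomTop : ∀ x : H, x ∈ S.closure.domain := fun x => mem_domain_of_mem_graph (hSgraph x)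
  have hSval : ∀ (x : H) (hx : x ∈ S.closure.domain), S.closure ⟨x, hx⟩ = A x := by
    intro x hx
    exact mem_graph_snd_inj S.closure (S.closure.mem_graph ⟨x, hx⟩) (hSgraph x) rfl
  -- conclusion 6
  have hconc6 : S.closure.domRestrict (Tt†).domain = Tt† + T† := by
    refine ext ?_ ?_
    · rw [domRestrict_domain, add_domain, hW]
      rw [inf_eq_left.mpr fun x _ => hSdomTop x]
      exact (inf_idem _).symm
    · rintro x hx1 hy
      have hx2 : (x : H) ∈ S.closure.domain := hSdomTop x
      rw [show S.closure.domRestrict (Tt†).domain ⟨x, hx1⟩ = S.closure ⟨x, hx2⟩ from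
          domRestrict_apply rfl,
        hSval x hx2, LinearPMap.add_apply]
      obtain ⟨hu, hval⟩ := hadj' ⟨x, hy.1⟩
      have : (T†) ⟨x, hy.2⟩ = A x - (Tt†) ⟨x, hy.1⟩ := hval
      rw [this]
      abel
  -- conclusion 5: equivalence of graph norms
  have hnorm : ∃ c₁ : ℝ, 0 < c₁ ∧ ∃ c₂ : ℝ, 0 < c₂ ∧
      ∀ (u : (Tt†).domain) (v : (T†).domain), (u : H) = (v : H) →
        ‖(u : H)‖ ^ 2 + ‖(Tt†) u‖ ^ 2 ≤ c₁ * (‖(u : H)‖ ^ 2 + ‖(T†) v‖ ^ 2) ∧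
        ‖(u : H)‖ ^ 2 + ‖(T†) v‖ ^ 2 ≤ c₂ * (‖(u : H)‖ ^ 2 + ‖(Tt†) u‖ ^ 2) := by
    refine ⟨2 + 2 * c ^ 2, by positivity, 2 + 2 * c ^ 2, by positivity, ?_⟩
    intro u v huv
    obtain ⟨hu, hval⟩ := hadj' u
    have hveq : (T†) v = A u - (Tt†) u := by
      have hv : v = ⟨(u : H), hu⟩ := Subtype.ext huv.symm
      rw [hv]; exact hval
    have h1 : ‖(T†) v‖ ≤ c * ‖(u : H)‖ + ‖(Tt†) u‖ := by
      rw [hveq]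
      calc ‖A u - (Tt†) u‖ ≤ ‖A (u : H)‖ + ‖(Tt†) u‖ := norm_sub_le _ _
      _ ≤ c * ‖(u : H)‖ + ‖(Tt†) u‖ := by gcongr; exact hAnorm u
    have h2 : ‖(Tt†) u‖ ≤ c * ‖(u : H)‖ + ‖(T†) v‖ := by
      have : (Tt†) u = A u - (T†) v := by rw [hveq]; abel
      rw [this]
      calc ‖A u - (T†) v‖ ≤ ‖A (u : H)‖ + ‖(T†) v‖ := norm_sub_le _ _
      _ ≤ c * ‖(u : H)‖ + ‖(T†) v‖ := by gcongr; exact hAnorm u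
    obtain ⟨a, ha2⟩ : ∃ a : ℝ, ‖(u : H)‖ = a := ⟨_, rfl⟩
    obtain ⟨b, hb2⟩ : ∃ b : ℝ, ‖(T†) v‖ = b := ⟨_, rfl⟩
    obtain ⟨t, ht2'⟩ : ∃ t : ℝ, ‖(Tt†) u‖ = t := ⟨_, rfl⟩
    have ha : 0 ≤ a := ha2 ▸ norm_nonneg _
    have hb : 0 ≤ b := hb2 ▸ norm_nonneg _
    have ht : 0 ≤ t := ht2' ▸ norm_nonneg _
    rw [ha2, hb2, ht2'] at h1 h2 ⊢
    exact ⟨aux_sq_ineq c a b t hc.le ha hb ht h2, aux_sq_ineq c a t b hc.le ha ht hb h1⟩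
  -- t1 for the closures
  have ht1cl : ∀ (φ : T.closure.domain) (ψ : Tt.closure.domain),
      ⟪T.closure φ, (ψ : H)⟫ = ⟪(φ : H), Tt.closure ψ⟫ := by
    intro φ ψ
    have hq : ∀ φ₀ : T.domain, ⟪Tt.closure ψ, (φ₀ : H)⟫ = ⟪(ψ : H), T φ₀⟫ :=
      fun φ₀ => aux_graph_closure hdT hfa' (Tt.closure.mem_graph ψ) φ₀
    have hsub : (T.graph : Set (H × H)) ⊆
        {p : H × H | ⟪p.2, (ψ : H)⟫ = ⟪p.1, Tt.closure ψ⟫} := by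
      rintro p hp
      obtain ⟨y, hy1, hy2⟩ := T.mem_graph_iff.mp hp
      rw [Set.mem_setOf_eq, ← hy1, ← hy2, ← inner_conj_symm, ← hq y, inner_conj_symm]
    have hclosed : _root_.IsClosed {p : H × H | ⟪p.2, (ψ : H)⟫ = ⟪p.1, Tt.closure ψ⟫} :=
      isClosed_eq (continuous_snd.inner continuous_const)
        (continuous_fst.inner continuous_const)
    have hmem : ((φ : H), T.closure φ) ∈
        {p : H × H | ⟪p.2, (ψ : H)⟫ = ⟪p.1, Tt.closure ψ⟫} := by
      have h1 : ((φ : H), T.closure φ) ∈ (T.closure.graph : Set (H × H)) :=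
        T.closure.mem_graph φ
      rw [← hTcl.graph_closure_eq_closure_graph] at h1
      rw [Submodule.topologicalClosure_coe] at h1
      exact closure_minimal hsub hclosed h1
    exact hmem
  -- the sum of the closures is A
  have hXval : ∀ φ : (T.closure + Tt.closure).domain,
      (T.closure + Tt.closure) φ = A (φ : H) := by
    intro φ
    rw [LinearPMap.add_apply]
    obtain ⟨hx, hval⟩ := htrans ⟨(φ : H), φ.2.1⟩
    have : Tt.closure ⟨(φ : H), φ.2.2⟩ = A (φ : H) - T.closure ⟨(φ : H), φ.2.1⟩ := hval
    rw [this]; abel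
  -- t3 bound for A
  have hA3 : ∀ x : H, 2 * μ₀ * ‖x‖ ^ 2 ≤ (⟪A x, x⟫).re := by
    have hsub : (S.domain : Set H) ⊆ {x : H | 2 * μ₀ * ‖x‖ ^ 2 ≤ (⟪A x, x⟫).re} :=
      fun x hx => by
        rw [Set.mem_setOf_eq, hAS ⟨x, hx⟩]
        exact ht3 ⟨x, hx⟩
    have hclosed : _root_.IsClosed {x : H | 2 * μ₀ * ‖x‖ ^ 2 ≤ (⟪A x, x⟫).re} :=
      isClosed_le (by fun_prop)
        (Complex.continuous_re.comp (A.continuous.inner continuous_id))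
    intro x
    have : x ∈ closure (S.domain : Set H) := by rw [hdS.closure_eq]; trivial
    exact closure_minimal hsub hclosed this
  refine ⟨hTcl, hTtcl, hW0, hW, hnorm, hconc6, ?_⟩
  refine ⟨⟨hW0, hdT.mono fun x hx => (le_closure T).1 hx, ht1cl, ⟨c, hc, ?_⟩⟩, ⟨μ₀, hμ₀, ?_⟩⟩
  · intro φ
    rw [hXval φ]
    exact hAnorm φ
  · intro φ
    rw [hXval φ]
    exact hA3 φ
end
end

section
/- Let (T, T̃) be a pair of densely defined operators with common dense domain on a complex Hilbert space H satisfying (T1) and (T2), and let [u | v] := ⟨T₁u, v⟩ − ⟨u, T̃₁v⟩ be the boundary form on the graph space W. Then: (i) [u | v] equals the complex conjugate of [v | u] for all u, v ∈ W; and (ii) for u ∈ W one has [u | v] = 0 for all v ∈ W if and only if u ∈ W₀; that is, the kernel of the boundary operator D : W → W′, Du := [u | ·], equals W₀. -/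
open LinearPMap
open scoped LinearPMap

noncomputable section

variable {H : Type*} [NormedAddCommGroup H] [InnerProductSpace ℂ H] [CompleteSpace H]

local notation "⟪" x ", " y "⟫" => @inner ℂ _ _ x y

section Aux

variable {S Tm : H →ₗ.[ℂ] H}

theorem aux_mem_adjoint_graph_iff (hS : Dense (S.domain : Set H)) {y w : H} :
    (y, w) ∈ (S†).graph ↔ ∀ x : S.domain, ⟪w, (x : H)⟫ = ⟪y, S x⟫ := by
  constructor
  · intro hyw x
    rcases (mem_graph_iff _).1 hyw with ⟨v, hv1, hv2⟩
    have h1 := adjoint_isFormalAdjoint hS v x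
    simp only at hv1 hv2
    rw [hv2, hv1] at h1
    exact h1
  · intro h
    have hy : y ∈ (S†).domain := mem_adjoint_domain_of_exists y ⟨w, h⟩
    have h2 := mem_graph (S†) ⟨y, hy⟩
    rwa [adjoint_apply_eq hS ⟨y, hy⟩ h] at h2

/-- The characterizing set of the closure of the graph. -/
theorem aux_charSet_isClosed (Tm : H →ₗ.[ℂ] H) :
    IsClosed {p : H × H | ∀ v : (Tm†).domain, ⟪p.2, (v : H)⟫ = ⟪p.1, (Tm†) v⟫} := by
  have : {p : H × H | ∀ v : (Tm†).domain, ⟪p.2, (v : H)⟫ = ⟪p.1, (Tm†) v⟫} =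
      ⋂ v : (Tm†).domain, {p : H × H | ⟪p.2, (v : H)⟫ = ⟪p.1, (Tm†) v⟫} := by
    ext p; simp [Set.mem_iInter]
  rw [this]
  exact isClosed_iInter fun v =>
    isClosed_eq (continuous_snd.inner continuous_const) (continuous_fst.inner continuous_const)

theorem aux_closure_graph_subset (hT : Dense (Tm.domain : Set H)) :
    closure (Tm.graph : Set (H × H)) ⊆
      {p : H × H | ∀ v : (Tm†).domain, ⟪p.2, (v : H)⟫ = ⟪p.1, (Tm†) v⟫} := by
  refine closure_minimal ?_ (aux_charSet_isClosed Tm)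
  rintro p hp v
  rcases (mem_graph_iff _).1 hp with ⟨x, hx1, hx2⟩
  have h1 := adjoint_isFormalAdjoint hT v x
  have h2 := congrArg (starRingEnd ℂ) h1
  rw [inner_conj_symm, inner_conj_symm] at h2
  rw [← hx1, ← hx2]
  exact h2.symm

theorem aux_mem_closure_graph (hT : Dense (Tm.domain : Set H)) {u w : H}
    (h : ∀ v : (Tm†).domain, ⟪w, (v : H)⟫ = ⟪u, (Tm†) v⟫) :
    (u, w) ∈ closure (Tm.graph : Set (H × H)) := by
  set e := WithLp.prodContinuousLinearEquiv 2 ℂ H H with he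
  set G : Submodule ℂ (WithLp 2 (H × H)) :=
    Tm.graph.comap (e : WithLp 2 (H × H) →ₗ[ℂ] H × H) with hG
  set K := G.topologicalClosure with hK
  haveI : CompleteSpace K := (Submodule.isClosed_topologicalClosure G).completeSpace_coe
  have hKmem : e.symm (u, w) ∈ K := by
    rw [← Submodule.orthogonal_orthogonal K, Submodule.mem_orthogonal]
    intro z hz
    set a := (e z).1 with ha
    set b := (e z).2 with hb
    have hbmem : ∀ x : Tm.domain, ⟪(-a : H), (x : H)⟫ = ⟪b, Tm x⟫ := by
      intro x
      have hx : e.symm ((x : H), Tm x) ∈ K := by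
        apply Submodule.le_topologicalClosure G
        rw [hG, Submodule.mem_comap]
        have heq : ((e : WithLp 2 (H × H) →ₗ[ℂ] H × H) (e.symm ((x : H), Tm x))) =
            ((x : H), Tm x) := e.apply_symm_apply _
        rw [heq]
        exact Tm.mem_graph x
      have h0 := hz _ hx
      have h0' : ⟪(x : H), a⟫ + ⟪Tm x, b⟫ = 0 := by
        rw [WithLp.prod_inner_apply] at h0
        exact h0
      have h1 : ⟪Tm x, b⟫ = -⟪(x : H), a⟫ := by linear_combination h0'
      rw [inner_neg_left, ← inner_conj_symm a ((x : H)), ← inner_conj_symm b (Tm x), h1,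
        _root_.map_neg]
    have hbd : b ∈ (Tm†).domain :=
      mem_adjoint_domain_of_exists b ⟨-a, hbmem⟩
    have hbv : (Tm†) ⟨b, hbd⟩ = -a := adjoint_apply_eq hT ⟨b, hbd⟩ (hbmem)
    have h3 : ⟪w, b⟫ = ⟪u, -a⟫ := by
      have := h ⟨b, hbd⟩
      rwa [hbv] at this
    have h4 : ⟪b, w⟫ = -⟪a, u⟫ := by
      rw [← inner_conj_symm b w, h3, inner_conj_symm, inner_neg_left]
    rw [WithLp.prod_inner_apply]
    have hfst : (e (e.symm (u, w))).1 = u := by rw [e.apply_symm_apply]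
    have hsnd : (e (e.symm (u, w))).2 = w := by rw [e.apply_symm_apply]
    have : ⟪a, (e (e.symm (u, w))).1⟫ + ⟪b, (e (e.symm (u, w))).2⟫ = 0 := by
      rw [hfst, hsnd, h4]; ring
    convert this using 2
    all_goals rfl
  -- now transfer back
  have hset : (K : Set (WithLp 2 (H × H))) =
      closure ((e.toHomeomorph) ⁻¹' (Tm.graph : Set (H × H))) := by
    rw [hK, Submodule.topologicalClosure_coe]
    rfl
  have hKmem' : e.symm (u, w) ∈ (K : Set (WithLp 2 (H × H))) := hKmem
  rw [hset, ← e.toHomeomorph.preimage_closure] at hKmem'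
  have : e (e.symm (u, w)) ∈ closure (Tm.graph : Set (H × H)) := hKmem'
  rwa [e.apply_symm_apply] at this

end Aux

/-- Under (T1)–(T2), with `T₁ := T̃*`, `T̃₁ := T*` and the boundary form
`[u | v] := ⟪T₁ u, v⟫ − ⟪u, T̃₁ v⟫` on the graph space `W = dom T₁ = dom T̃₁`:
(i) `[u | v]` equals the conjugate of `[v | u]`; (ii) `[u | v] = 0` for all `v ∈ W` iff
`u ∈ W₀ = dom T̄`, i.e. the kernel of the boundary operator is `W₀`.
(Elements of `W` are represented as elements of `dom T̃*` together with the corresponding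
element of `dom T*` carrying the same vector of `H`.) -/
theorem statement2 (T Tt : H →ₗ.[ℂ] H) (hF : IsPreFriedrichsPair T Tt) :
    (∀ (u₁ : (Tt†).domain) (u₂ : (T†).domain), (u₁ : H) = (u₂ : H) →
      ∀ (v₁ : (Tt†).domain) (v₂ : (T†).domain), (v₁ : H) = (v₂ : H) →
        ⟪(Tt†) u₁, (v₁ : H)⟫ - ⟪(u₁ : H), (T†) v₂⟫ =
          (starRingEnd ℂ) (⟪(Tt†) v₁, (u₁ : H)⟫ - ⟪(v₁ : H), (T†) u₂⟫)) ∧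
    (∀ u₁ : (Tt†).domain,
      ((∀ (v₁ : (Tt†).domain) (v₂ : (T†).domain), (v₁ : H) = (v₂ : H) →
          ⟪(Tt†) u₁, (v₁ : H)⟫ - ⟪(u₁ : H), (T†) v₂⟫ = 0) ↔
        (u₁ : H) ∈ T.closure.domain)) := by
  obtain ⟨c, hc0, hc⟩ := hF.t2
  have hdenseT : Dense (T.domain : Set H) := hF.dense'
  have hdenseTt : Dense (Tt.domain : Set H) := hF.dom_eq ▸ hF.dense'
  have hdomAdd : (T + Tt).domain = T.domain := by
    rw [add_domain, ← hF.dom_eq, inf_idem]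
  have hdenseD : Dense (((T + Tt).domain : Submodule ℂ H) : Set H) := by
    rw [hdomAdd]; exact hdenseT
  set D := (T + Tt).domain with hD
  -- the bounded symmetric operator C extending T + Tt
  let f : D →L[ℂ] H := LinearMap.mkContinuous (T + Tt).toFun c fun x => hc x
  let C : H →L[ℂ] H := f.extend (Submodule.subtypeL D)
  have hCx : ∀ x : D, C (x : H) = (T + Tt) x := fun x =>
    ContinuousLinearMap.extend_eq (f := f) (e := Submodule.subtypeL D) hdenseD.denseRange_val
      isUniformEmbedding_subtype_val.isUniformInducing x
  -- symmetry of T + Tt on its domain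
  have hsym : ∀ x y : D, ⟪(T + Tt) x, (y : H)⟫ = ⟪(x : H), (T + Tt) y⟫ := by
    intro x y
    have h1 : ⟪T ⟨(x : H), x.prop.1⟩, (y : H)⟫ = ⟪(x : H), Tt ⟨(y : H), y.prop.2⟩⟫ :=
      hF.t1 ⟨(x : H), x.prop.1⟩ ⟨(y : H), y.prop.2⟩
    have h2 : ⟪Tt ⟨(x : H), x.prop.2⟩, (y : H)⟫ = ⟪(x : H), T ⟨(y : H), y.prop.1⟩⟫ := by
      have h3 := congrArg (starRingEnd ℂ) (hF.t1 ⟨(y : H), y.prop.1⟩ ⟨(x : H), x.prop.2⟩)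
      rw [inner_conj_symm, inner_conj_symm] at h3
      exact h3.symm
    rw [add_apply T Tt x, add_apply T Tt y, inner_add_left, inner_add_right]
    rw [h1, h2]
    ring
  -- C is symmetric
  have hCsym : ∀ x y : H, ⟪C x, y⟫ = ⟪x, C y⟫ := by
    have h1 : ∀ y : D, ∀ x : H, ⟪C x, (y : H)⟫ = ⟪x, C (y : H)⟫ := by
      intro y
      have heq : (fun x : H => ⟪C x, (y : H)⟫) = fun x : H => ⟪x, C (y : H)⟫ := by
        refine Continuous.ext_on hdenseD (C.continuous.inner continuous_const)
          (continuous_id.inner continuous_const) ?_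
        rintro x hx
        have hx' : x ∈ D := hx
        show ⟪C x, (y : H)⟫ = ⟪x, C (y : H)⟫
        have e1 : C x = (T + Tt) ⟨x, hx'⟩ := hCx ⟨x, hx'⟩
        have e2 : C (y : H) = (T + Tt) y := hCx y
        rw [e1, e2]
        exact hsym ⟨x, hx'⟩ y
      exact fun x => congrFun heq x
    intro x y
    have heq : (fun y : H => ⟪C x, y⟫) = fun y : H => ⟪x, C y⟫ := by
      refine Continuous.ext_on hdenseD (continuous_const.inner continuous_id)
        (continuous_const.inner C.continuous) ?_
      rintro y hy
      exact h1 ⟨y, hy⟩ x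
    exact congrFun heq y
  -- the sum of the two adjoints at a common vector is C
  have hval : ∀ (p₁ : (Tt†).domain) (p₂ : (T†).domain), (p₁ : H) = (p₂ : H) →
      (Tt†) p₁ + (T†) p₂ = C (p₁ : H) := by
    intro p₁ p₂ hp
    refine hdenseD.denseRange_val.eq_of_inner_left ℂ fun x => ?_
    have e1 : ⟪(Tt†) p₁, (x : H)⟫ = ⟪(p₁ : H), Tt ⟨(x : H), x.prop.2⟩⟫ :=
      adjoint_isFormalAdjoint hdenseTt p₁ ⟨(x : H), x.prop.2⟩
    have e2 : ⟪(T†) p₂, (x : H)⟫ = ⟪(p₂ : H), T ⟨(x : H), x.prop.1⟩⟫ :=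
      adjoint_isFormalAdjoint hdenseT p₂ ⟨(x : H), x.prop.1⟩
    have e3 : ⟪C (p₁ : H), (x : H)⟫ = ⟪(p₁ : H), (T + Tt) x⟫ := by
      rw [hCsym, hCx]
    rw [inner_add_left, e1, e2, e3, add_apply T Tt x, inner_add_right, ← hp]
    ring
  -- domain inclusion: dom T† ⊆ dom Tt†
  have hdom_sub : ∀ y : H, y ∈ (T†).domain → y ∈ (Tt†).domain := by
    intro y hy
    refine mem_adjoint_domain_of_exists y ⟨C y - (T†) ⟨y, hy⟩, fun x => ?_⟩
    have hxT : (x : H) ∈ T.domain := by rw [hF.dom_eq]; exact x.prop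
    have hxD : (x : H) ∈ D := by
      rw [hD, add_domain]
      exact ⟨hxT, x.prop⟩
    have e0 : C ((x : H)) = (T + Tt) ⟨(x : H), hxD⟩ := hCx ⟨(x : H), hxD⟩
    have e1 : ⟪C y, (x : H)⟫ = ⟪y, (T + Tt) ⟨(x : H), hxD⟩⟫ := by
      rw [hCsym, e0]
    have e2 : ⟪(T†) ⟨y, hy⟩, (x : H)⟫ = ⟪y, T ⟨(x : H), hxT⟩⟫ :=
      adjoint_isFormalAdjoint hdenseT ⟨y, hy⟩ ⟨(x : H), hxT⟩
    have e3 : (T + Tt) ⟨(x : H), hxD⟩ = T ⟨(x : H), hxT⟩ + Tt x := by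
      rw [add_apply T Tt ⟨(x : H), hxD⟩]
    rw [inner_sub_left, e1, e2, e3, inner_add_right]
    ring
  -- basic order facts
  have hFA : T.IsFormalAdjoint Tt := hF.t1
  have hle1 : T ≤ Tt† := LinearPMap.IsFormalAdjoint.le_adjoint hdenseTt hFA.symm
  have hclosedTt : (Tt†).IsClosed := by
    have heq : ((Tt†).graph : Set (H × H)) =
        ⋂ x : Tt.domain, {p : H × H | ⟪p.2, (x : H)⟫ = ⟪p.1, Tt x⟫} := by
      ext ⟨y, w⟩
      simp only [Set.mem_iInter, Set.mem_setOf_eq, SetLike.mem_coe,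
        aux_mem_adjoint_graph_iff hdenseTt]
    show IsClosed ((Tt†).graph : Set (H × H))
    rw [heq]
    exact isClosed_iInter fun x => isClosed_eq (continuous_snd.inner continuous_const)
      (continuous_fst.inner continuous_const)
  have hclosable : T.IsClosable := isClosable_iff_exists_closed_extension.2 ⟨Tt†, hclosedTt, hle1⟩
  have hgraph_le : T.graph ≤ (Tt†).graph := by
    intro p hp
    rcases (mem_graph_iff _).1 hp with ⟨x, hx1, hx2⟩
    have hxd : (x : H) ∈ (Tt†).domain := hle1.1 x.prop
    have hee : T x = (Tt†) ⟨(x : H), hxd⟩ := hle1.2 rfl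
    rw [mem_graph_iff]
    exact ⟨⟨(x : H), hxd⟩, hx1, by rw [← hee, hx2]⟩
  have hclosure_le_graph : T.closure.graph ≤ (Tt†).graph := by
    rw [← hclosable.graph_closure_eq_closure_graph]
    exact Submodule.topologicalClosure_minimal _ hgraph_le (by exact hclosedTt)
  constructor
  · -- part (i)
    intro u₁ u₂ hu v₁ v₂ hv
    have h1 := hval u₁ u₂ hu
    have h2 := hval v₁ v₂ hv
    have hgoal : ⟪(Tt†) u₁ + (T†) u₂, (v₁ : H)⟫ = ⟪(u₁ : H), (Tt†) v₁ + (T†) v₂⟫ := by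
      rw [h1, h2, hCsym]
    rw [inner_add_left, inner_add_right] at hgoal
    simp only [_root_.map_sub, inner_conj_symm]
    linear_combination hgoal
  · -- part (ii)
    intro u₁
    constructor
    · intro hbdry
      have h' : ∀ v : (T†).domain, ⟪(Tt†) u₁, (v : H)⟫ = ⟪(u₁ : H), (T†) v⟫ := by
        intro v
        have hv1 : (v : H) ∈ (Tt†).domain := hdom_sub _ v.prop
        have := hbdry ⟨(v : H), hv1⟩ v rfl
        rw [sub_eq_zero] at this
        exact this
      have hmem := aux_mem_closure_graph hdenseT h'
      have hmem2 : ((u₁ : H), (Tt†) u₁) ∈ T.closure.graph := by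
        rw [← hclosable.graph_closure_eq_closure_graph]
        rwa [← Submodule.topologicalClosure_coe] at hmem
      rcases (mem_graph_iff _).1 hmem2 with ⟨x, hx1, _⟩
      rw [show ((u₁ : H)) = ((x : H)) from hx1.symm]
      exact x.prop
    · intro hu v₁ v₂ hv
      have hgmem : ((u₁ : H), T.closure ⟨(u₁ : H), hu⟩) ∈ T.closure.graph :=
        T.closure.mem_graph ⟨(u₁ : H), hu⟩
      have h1 : (Tt†) u₁ = T.closure ⟨(u₁ : H), hu⟩ := by
        rcases (mem_graph_iff _).1 (hclosure_le_graph hgmem) with ⟨y, hy1, hy2⟩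
        have hyu : y = u₁ := Subtype.ext hy1
        rw [hyu] at hy2
        exact hy2
      have hmemcl : ((u₁ : H), T.closure ⟨(u₁ : H), hu⟩) ∈ closure (T.graph : Set (H × H)) := by
        have h0 : ((u₁ : H), T.closure ⟨(u₁ : H), hu⟩) ∈ T.graph.topologicalClosure := by
          rw [hclosable.graph_closure_eq_closure_graph]
          exact hgmem
        exact h0
      have h2 := aux_closure_graph_subset hdenseT hmemcl v₂
      rw [h1, hv]
      rw [show (⟪T.closure ⟨(u₁ : H), hu⟩, (v₂ : H)⟫ : ℂ) = ⟪(u₁ : H), (T†) v₂⟫ from h2]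
      ring
end
end

section
/- Let (T₀, T̃₀) be a pair of closed densely defined operators on a complex Hilbert space H satisfying (T1) and (T2), and let V and Ṽ be subspaces of the graph space W that contain W₀. Then (T₁|_V)* = T̃₁|_Ṽ if and only if Ṽ = V^{[⊥]}, and (T̃₁|_Ṽ)* = T₁|_V if and only if V = Ṽ^{[⊥]}. In particular, if V is closed in W, then the single condition Ṽ = V^{[⊥]} implies that T₁|_V and T̃₁|_Ṽ are mutually adjoint. -/
open LinearPMap
open scoped LinearPMap

noncomputable section

variable {H : Type*} [NormedAddCommGroup H] [InnerProductSpace ℂ H] [CompleteSpace H]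

local notation "⟪" x ", " y "⟫" => @inner ℂ _ _ x y

/-- The `[⊥]`-orthogonal complement, inside the graph space `W = dom T₁ = dom T̃₁`, of a set
`S ⊆ W`, with respect to the boundary form `[u | v] := ⟪T₁ u, v⟫ − ⟪u, T̃₁ v⟫`. -/
def bdryPerp (T₁ Tt₁ : H →ₗ.[ℂ] H) (S : Set H) : Set H :=
  {x | ∃ hx : x ∈ T₁.domain,
    ∀ (v : T₁.domain) (w : Tt₁.domain), (v : H) = (w : H) → (v : H) ∈ S →
      ⟪T₁ ⟨x, hx⟩, (v : H)⟫ - ⟪x, Tt₁ w⟫ = 0}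

set_option linter.unusedSectionVars false

namespace IsPreFriedrichsPair

variable {T Tt : H →ₗ.[ℂ] H}

protected lemma symm (hF : IsPreFriedrichsPair T Tt) : IsPreFriedrichsPair Tt T where
  dom_eq := hF.dom_eq.symm
  dense' := hF.dom_eq ▸ hF.dense'
  t1 φ ψ := by
    rw [← inner_conj_symm, ← hF.t1 ψ φ, inner_conj_symm]
  t2 := by
    obtain ⟨c, hc, h⟩ := hF.t2
    rw [add_comm]
    exact ⟨c, hc, h⟩

lemma dense_sum (hF : IsPreFriedrichsPair T Tt) : Dense (((T + Tt).domain : Set H)) := by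
  have h : (T + Tt).domain = T.domain := by
    rw [add_domain, ← hF.dom_eq, inf_idem]
  rw [h]; exact hF.dense'

lemma denseTt (hF : IsPreFriedrichsPair T Tt) : Dense ((Tt.domain : Set H)) :=
  hF.dom_eq ▸ hF.dense'

lemma le_adj (hF : IsPreFriedrichsPair T Tt) : T ≤ Tt† := by
  have h : Tt.IsFormalAdjoint T := hF.symm.t1
  exact h.le_adjoint hF.denseTt

lemma exists_symEx (hF : IsPreFriedrichsPair T Tt) :
    ∃ D : H →L[ℂ] H, (∀ x y : H, ⟪D x, y⟫ = ⟪x, D y⟫) ∧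
      ∀ φ : (T + Tt).domain, D φ = (T + Tt) φ := by
  obtain ⟨c, hc, hbound⟩ := hF.t2
  have hd : Dense (((T + Tt).domain : Set H)) := hF.dense_sum
  let f : (T + Tt).domain →L[ℂ] H :=
    LinearMap.mkContinuous (T + Tt).toFun c (fun x => by simpa using hbound x)
  let D : H →L[ℂ] H := f.extend (Submodule.subtypeL (T + Tt).domain)
  have hDe : ∀ φ : (T + Tt).domain, D φ = (T + Tt) φ := fun φ =>
    ContinuousLinearMap.extend_eq (f := f) (e := Submodule.subtypeL (T + Tt).domain)
      hd.denseRange_val isUniformEmbedding_subtype_val.isUniformInducing φ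
  refine ⟨D, ?_, hDe⟩
  have h0 : ∀ φ ψ : (T + Tt).domain, ⟪(T + Tt) φ, (ψ : H)⟫ = ⟪(φ : H), (T + Tt) ψ⟫ := by
    intro φ ψ
    rw [LinearPMap.add_apply, LinearPMap.add_apply, inner_add_left, inner_add_right,
      hF.t1 ⟨φ, φ.2.1⟩ ⟨ψ, ψ.2.2⟩, hF.symm.t1 ⟨φ, φ.2.2⟩ ⟨ψ, ψ.2.1⟩]
    ring
  have hA : ∀ φ : (T + Tt).domain, ∀ y : H, ⟪D (φ : H), y⟫ = ⟪(φ : H), D y⟫ := by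
    intro φ
    have key : (fun y : H => ⟪D (φ : H), y⟫) = fun y : H => ⟪(φ : H), D y⟫ := by
      refine Continuous.ext_on hd ?_ ?_ (fun y hy => ?_)
      · exact Continuous.inner continuous_const continuous_id
      · exact Continuous.inner continuous_const D.continuous
      · show ⟪D (φ:H), y⟫ = ⟪(φ:H), D y⟫
        rw [hDe φ, show D y = (T + Tt) ⟨y, hy⟩ from hDe ⟨y, hy⟩]
        exact h0 φ ⟨y, hy⟩
    exact fun y => congrFun key y
  intro x y
  have key : (fun x : H => ⟪D x, y⟫) = fun x : H => ⟪x, D y⟫ := by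
    refine Continuous.ext_on hd ?_ ?_ (fun x hx => hA ⟨x, hx⟩ y)
    · exact Continuous.inner D.continuous continuous_const
    · exact Continuous.inner continuous_id continuous_const
  exact congrFun key x

end IsPreFriedrichsPair

namespace IsPreFriedrichsPair2

variable {T Tt : H →ₗ.[ℂ] H}

open IsPreFriedrichsPair

lemma adj_facts (hF : IsPreFriedrichsPair T Tt) :
    ∃ D : H →L[ℂ] H, (∀ x y : H, ⟪D x, y⟫ = ⟪x, D y⟫) ∧
      (Tt†).domain = (T†).domain ∧
      ∀ (u : H) (hu : u ∈ (Tt†).domain) (hu' : u ∈ (T†).domain),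
        (Tt† ⟨u, hu⟩ : H) + (T† ⟨u, hu'⟩ : H) = D u := by
  obtain ⟨D, hsym, hDe⟩ := hF.exists_symEx
  have hdT : Dense (T.domain : Set H) := hF.dense'
  have hdTt : Dense (Tt.domain : Set H) := hF.denseTt
  -- membership transfer from dom Tt† to dom T†
  have dir1 : ∀ (u : H) (hu : u ∈ (Tt†).domain),
      ∃ hu' : u ∈ (T†).domain, (T† ⟨u, hu'⟩ : H) = D u - Tt† ⟨u, hu⟩ := by
    intro u hu
    have hx₀ : ∀ x : T.domain, ⟪D u - (Tt† ⟨u, hu⟩ : H), (x : H)⟫ = ⟪u, T x⟫ := by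
      intro x
      have hxS : (x : H) ∈ (T + Tt).domain := ⟨x.2, hF.dom_eq ▸ x.2⟩
      have hxt : (x : H) ∈ Tt.domain := hF.dom_eq ▸ x.2
      have h1 : ⟪D u, (x : H)⟫ = ⟪u, (T + Tt) ⟨x, hxS⟩⟫ := by
        rw [hsym u x, hDe ⟨x, hxS⟩]
      have h2 : ⟪(Tt† ⟨u, hu⟩ : H), (x : H)⟫ = ⟪u, Tt ⟨x, hxt⟩⟫ :=
        (adjoint_isFormalAdjoint hdTt) ⟨u, hu⟩ ⟨x, hxt⟩
      rw [inner_sub_left, h1, h2, LinearPMap.add_apply, inner_add_right]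
      exact add_sub_cancel_right _ _
    have hu' : u ∈ (T†).domain :=
      mem_adjoint_domain_of_exists u ⟨D u - Tt† ⟨u, hu⟩, hx₀⟩
    exact ⟨hu', adjoint_apply_eq hdT ⟨u, hu'⟩ hx₀⟩
  have dir2 : ∀ (u : H) (hu' : u ∈ (T†).domain),
      ∃ hu : u ∈ (Tt†).domain, (Tt† ⟨u, hu⟩ : H) = D u - T† ⟨u, hu'⟩ := by
    intro u hu'
    have hx₀ : ∀ x : Tt.domain, ⟪D u - (T† ⟨u, hu'⟩ : H), (x : H)⟫ = ⟪u, Tt x⟫ := by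
      intro x
      have hxT : (x : H) ∈ T.domain := by rw [hF.dom_eq]; exact x.2
      have hxS : (x : H) ∈ (T + Tt).domain := ⟨hxT, x.2⟩
      have h1 : ⟪D u, (x : H)⟫ = ⟪u, (T + Tt) ⟨x, hxS⟩⟫ := by
        rw [hsym u x, hDe ⟨x, hxS⟩]
      have h2 : ⟪(T† ⟨u, hu'⟩ : H), (x : H)⟫ = ⟪u, T ⟨x, hxT⟩⟫ :=
        (adjoint_isFormalAdjoint hdT) ⟨u, hu'⟩ ⟨x, hxT⟩
      rw [inner_sub_left, h1, h2, LinearPMap.add_apply, inner_add_right]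
      rw [add_comm (⟪u, T ⟨(x : H), hxS.1⟩⟫)]
      exact add_sub_cancel_right _ _
    have hu : u ∈ (Tt†).domain :=
      mem_adjoint_domain_of_exists u ⟨D u - T† ⟨u, hu'⟩, hx₀⟩
    exact ⟨hu, adjoint_apply_eq hdTt ⟨u, hu⟩ hx₀⟩
  refine ⟨D, hsym, ?_, ?_⟩
  · exact le_antisymm (fun u hu => (dir1 u hu).1) (fun u hu' => (dir2 u hu').1)
  · intro u hu hu'
    obtain ⟨hu'', heq⟩ := dir1 u hu
    have heq' : (T† ⟨u, hu'⟩ : H) = D u - Tt† ⟨u, hu⟩ := heq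
    rw [heq']
    abel

end IsPreFriedrichsPair2


namespace Statement4Aux

open IsPreFriedrichsPair IsPreFriedrichsPair2

variable {T Tt : H →ₗ.[ℂ] H}

lemma dom_adj_eq (hF : IsPreFriedrichsPair T Tt) : (Tt†).domain = (T†).domain :=
  (adj_facts hF).choose_spec.2.1

lemma keyE (hF : IsPreFriedrichsPair T Tt) (u x : H) (hu : u ∈ (Tt†).domain)
    (hu' : u ∈ (T†).domain) (hx : x ∈ (Tt†).domain) (hx' : x ∈ (T†).domain) :
    ⟪(Tt† ⟨u, hu⟩ : H), x⟫ - ⟪u, (T† ⟨x, hx'⟩ : H)⟫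
      = ⟪u, (Tt† ⟨x, hx⟩ : H)⟫ - ⟪(T† ⟨u, hu'⟩ : H), x⟫ := by
  obtain ⟨D, hsym, hdom, hsum⟩ := adj_facts hF
  have h1 : ⟪(Tt† ⟨u, hu⟩ : H), x⟫ + ⟪(T† ⟨u, hu'⟩ : H), x⟫ = ⟪D u, x⟫ := by
    rw [← inner_add_left, hsum u hu hu']
  have h2 : ⟪u, (Tt† ⟨x, hx⟩ : H)⟫ + ⟪u, (T† ⟨x, hx'⟩ : H)⟫ = ⟪u, D x⟫ := by
    rw [← inner_add_right, hsum x hx hx']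
  have h3 := hsym u x
  linear_combination h1 - h2 + h3

lemma adj_char (hF : IsPreFriedrichsPair T Tt) (V : Submodule ℂ H)
    (hV₀ : T.domain ≤ V) (hVW : V ≤ (Tt†).domain) :
    ∀ (y : H) (hy : y ∈ (((Tt†).domRestrict V)†).domain),
      ∃ hyB : y ∈ (T†).domain,
        ((((Tt†).domRestrict V)† ⟨y, hy⟩ : H) = T† ⟨y, hyB⟩) ∧
        ∀ (x : (Tt†).domain), (x : H) ∈ V →
          ⟪(Tt† x : H), y⟫ = ⟪(x : H), (T† ⟨y, hyB⟩ : H)⟫ := by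
  intro y hy
  set R := (Tt†).domRestrict V with hR
  have hTA : T ≤ Tt† := hF.le_adj
  have hdT : Dense (T.domain : Set H) := hF.dense'
  have hdV : Dense ((R.domain : Set H)) := by
    refine Dense.mono ?_ hdT
    intro x hx
    exact ⟨hV₀ hx, hTA.1 hx⟩
  have hfa := adjoint_isFormalAdjoint hdV (T := R)
  have hx₀T : ∀ φ : T.domain, ⟪(R† ⟨y, hy⟩ : H), (φ : H)⟫ = ⟪y, T φ⟫ := by
    intro φ
    have hmem : (φ : H) ∈ R.domain := ⟨hV₀ φ.2, hTA.1 φ.2⟩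
    have h1 := hfa ⟨y, hy⟩ ⟨φ, hmem⟩
    have h2 : R ⟨(φ : H), hmem⟩ = Tt† ⟨(φ : H), hTA.1 φ.2⟩ := domRestrict_apply rfl
    have h3 : T φ = Tt† ⟨(φ : H), hTA.1 φ.2⟩ := hTA.2 rfl
    rw [h1, h2, ← h3]
  have hyB : y ∈ (T†).domain :=
    mem_adjoint_domain_of_exists y ⟨R† ⟨y, hy⟩, hx₀T⟩
  refine ⟨hyB, (adjoint_apply_eq hdT ⟨y, hyB⟩ hx₀T).symm, ?_⟩
  intro x hxV
  have hmem : (x : H) ∈ R.domain := ⟨hxV, x.2⟩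
  have h1 := hfa ⟨y, hy⟩ ⟨x, hmem⟩
  have h2 : R ⟨(x : H), hmem⟩ = Tt† x := domRestrict_apply rfl
  have hval : (T† ⟨y, hyB⟩ : H) = R† ⟨y, hy⟩ := adjoint_apply_eq hdT ⟨y, hyB⟩ hx₀T
  rw [← inner_conj_symm ((Tt† x : H)) y, ← h2, ← h1, inner_conj_symm, hval]

lemma adj_mem (hF : IsPreFriedrichsPair T Tt) (V : Submodule ℂ H)
    (hV₀ : T.domain ≤ V) (hVW : V ≤ (Tt†).domain) (y : H) (hyB : y ∈ (T†).domain)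
    (hcond : ∀ (x : (Tt†).domain), (x : H) ∈ V →
      ⟪(Tt† x : H), y⟫ = ⟪(x : H), (T† ⟨y, hyB⟩ : H)⟫) :
    y ∈ (((Tt†).domRestrict V)†).domain := by
  set R := (Tt†).domRestrict V with hR
  refine mem_adjoint_domain_of_exists y ⟨T† ⟨y, hyB⟩, ?_⟩
  intro q
  have hq2 : (q : H) ∈ (Tt†).domain := q.2.2
  have h2 : R q = Tt† ⟨(q : H), hq2⟩ := domRestrict_apply rfl
  rw [h2, ← inner_conj_symm y ((Tt† ⟨(q : H), hq2⟩ : H)), hcond ⟨q, hq2⟩ q.2.1,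
    inner_conj_symm]

lemma bdry_iff (hF : IsPreFriedrichsPair T Tt) (V : Submodule ℂ H) (y : H) :
    y ∈ bdryPerp (Tt†) (T†) (V : Set H) ↔
      ∃ hyB : y ∈ (T†).domain, ∀ (x : (Tt†).domain), (x : H) ∈ V →
        ⟪(Tt† x : H), y⟫ = ⟪(x : H), (T† ⟨y, hyB⟩ : H)⟫ := by
  have hdom := dom_adj_eq hF
  constructor
  · rintro ⟨hyA, hrest⟩
    have hyB : y ∈ (T†).domain := by rw [← hdom]; exact hyA
    refine ⟨hyB, ?_⟩
    intro x hxV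
    have hx' : (x : H) ∈ (T†).domain := by rw [← hdom]; exact x.2
    have h0 := hrest x ⟨x, hx'⟩ rfl hxV
    have hkey := keyE hF y x hyA hyB x.2 hx'
    have h1 : ⟪y, (Tt† x : H)⟫ - ⟪(T† ⟨y, hyB⟩ : H), (x : H)⟫ = 0 := by
      rw [← hkey]
      convert h0 using 3
    rw [← inner_conj_symm ((Tt† x : H)) y, sub_eq_zero.mp h1, inner_conj_symm]
  · rintro ⟨hyB, hcond⟩
    have hyA : y ∈ (Tt†).domain := by rw [hdom]; exact hyB
    refine ⟨hyA, ?_⟩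
    intro v w hvw hvV
    have hv' : (v : H) ∈ (T†).domain := by rw [← hdom]; exact v.2
    have hw : T† w = T† ⟨(v : H), hv'⟩ := by
      congr 1
      exact Subtype.ext hvw.symm
    rw [hw]
    have hkey := keyE hF y v hyA hyB v.2 hv'
    have h0 : ⟪y, (Tt† v : H)⟫ = ⟪(T† ⟨y, hyB⟩ : H), (v : H)⟫ := by
      rw [← inner_conj_symm, hcond v hvV, inner_conj_symm]
    have hkey' : ⟪(Tt† ⟨y, hyA⟩ : H), (v : H)⟫ - ⟪y, (T† ⟨(v : H), hv'⟩ : H)⟫ = 0 := by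
      rw [hkey]
      rw [show (Tt† ⟨(v : H), v.2⟩ : H) = Tt† v from rfl, h0, sub_self]
    convert hkey' using 3
  
end Statement4Aux

namespace Statement4Aux

variable {T Tt : H →ₗ.[ℂ] H}

open IsPreFriedrichsPair IsPreFriedrichsPair2

lemma dom_set_eq_bdry (hF : IsPreFriedrichsPair T Tt) (V : Submodule ℂ H)
    (hV₀ : T.domain ≤ V) (hVW : V ≤ (Tt†).domain) :
    (((((Tt†).domRestrict V)†).domain : Set H)) = bdryPerp (Tt†) (T†) (V : Set H) := by
  ext y
  constructor
  · intro hy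
    obtain ⟨hyB, _, hcond⟩ := adj_char hF V hV₀ hVW y hy
    exact (bdry_iff hF V y).mpr ⟨hyB, hcond⟩
  · intro hy
    obtain ⟨hyB, hcond⟩ := (bdry_iff hF V y).mp hy
    exact adj_mem hF V hV₀ hVW y hyB hcond

lemma core (hF : IsPreFriedrichsPair T Tt) (V Vt : Submodule ℂ H)
    (hV₀ : T.domain ≤ V) (hVW : V ≤ (Tt†).domain) (hVtW : Vt ≤ (T†).domain) :
    ((((Tt†).domRestrict V)† = (T†).domRestrict Vt) ↔
        (Vt : Set H) = bdryPerp (Tt†) (T†) (V : Set H)) := by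
  have hset := dom_set_eq_bdry hF V hV₀ hVW
  have hdomVt : ((T†).domRestrict Vt).domain = Vt := by
    rw [domRestrict_domain]
    exact inf_eq_left.mpr hVtW
  constructor
  · intro h
    rw [← hset, h, hdomVt]
  · intro h
    have hVtd : Vt = (((Tt†).domRestrict V)†).domain :=
      SetLike.coe_injective (h.trans hset.symm)
    refine LinearPMap.ext ?_ ?_
    · rw [hdomVt, hVtd]
    · intro x hx hy
      obtain ⟨hyB, hval, _⟩ := adj_char hF V hV₀ hVW x hx
      have h2 : ((T†).domRestrict Vt) ⟨x, hy⟩ = T† ⟨x, hy.2⟩ := domRestrict_apply rfl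
      rw [hval, h2]

lemma bdry_symm_le (hF : IsPreFriedrichsPair T Tt) (s : Set H) :
    bdryPerp (Tt†) (T†) s ⊆ bdryPerp (T†) (Tt†) s := by
  have hdom := dom_adj_eq hF
  rintro y ⟨hyA, hcond⟩
  have hyB : y ∈ (T†).domain := by rw [← hdom]; exact hyA
  refine ⟨hyB, ?_⟩
  intro v w hvw hvs
  have hws : (w : H) ∈ s := by rw [← hvw]; exact hvs
  have hv'' : (w : H) ∈ (T†).domain := by rw [← hvw]; exact v.2
  have h0 := hcond w v hvw.symm hws
  have hkey := keyE hF y (w : H) hyA hyB w.2 hv''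
  have hTv : T† ⟨(w : H), hv''⟩ = T† v := by
    congr 1
    exact Subtype.ext hvw.symm
  rw [hTv] at hkey
  have h1 : ⟪y, (Tt† ⟨(w : H), w.2⟩ : H)⟫ - ⟪(T† ⟨y, hyB⟩ : H), (w : H)⟫ = 0 := by
    rw [← hkey, h0]
  have h2 : (Tt† ⟨(w : H), w.2⟩ : H) = Tt† w := rfl
  rw [h2] at h1
  rw [hvw, sub_eq_zero]
  rw [sub_eq_zero] at h1
  exact h1.symm

end Statement4Aux

namespace Statement4Aux

variable {T Tt : H →ₗ.[ℂ] H}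

open IsPreFriedrichsPair IsPreFriedrichsPair2

lemma graph_restrict {V : Submodule ℂ H} (hVW : V ≤ (Tt†).domain) :
    (((Tt†).domRestrict V).graph : Set (H × H)) = {p : H × H | p.1 ∈ V ∧ p ∈ (Tt†).graph} := by
  ext p
  simp only [SetLike.mem_coe, mem_graph_iff, Set.mem_setOf_eq]
  constructor
  · rintro ⟨x, hx1, hx2⟩
    refine ⟨hx1 ▸ x.2.1, ?_⟩
    have h2 : ((Tt†).domRestrict V) x = Tt† ⟨(x : H), x.2.2⟩ := domRestrict_apply rfl
    exact ⟨⟨(x : H), x.2.2⟩, hx1, by rw [← h2, hx2]⟩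
  · rintro ⟨h1, x, hx1, hx2⟩
    have hxV : (x : H) ∈ V := hx1 ▸ h1
    refine ⟨⟨x, hxV, x.2⟩, hx1, ?_⟩
    have h2 : ((Tt†).domRestrict V) ⟨(x : H), hxV, x.2⟩ = Tt† x := domRestrict_apply rfl
    rw [h2, hx2]

lemma closed_refl (hF : IsPreFriedrichsPair T Tt) (V Vt : Submodule ℂ H)
    (hV₀ : T.domain ≤ V) (hVW : V ≤ (Tt†).domain) (hVtW : Vt ≤ (T†).domain)
    (hClosed : IsClosed {p : H × H | p.1 ∈ V ∧ p ∈ (Tt†).graph})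
    (hVt : (Vt : Set H) = bdryPerp (Tt†) (T†) (V : Set H)) :
    (V : Set H) = bdryPerp (Tt†) (T†) (Vt : Set H) := by
  have hdom := dom_adj_eq hF
  have hdT : Dense (T.domain : Set H) := hF.dense'
  have hTA : T ≤ Tt† := hF.le_adj
  set R := (Tt†).domRestrict V with hRdef
  have hdV : Dense ((R.domain : Set H)) := by
    refine Dense.mono ?_ hdT
    intro x hx
    exact ⟨hV₀ hx, hTA.1 hx⟩
  have hVtR : (Vt : Set H) = ((R†).domain : Set H) :=
    hVt.trans (dom_set_eq_bdry hF V hV₀ hVW).symm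
  -- the ambient L² product space
  let eL : WithLp 2 (H × H) ≃ₗ[ℂ] H × H := WithLp.linearEquiv 2 ℂ (H × H)
  let L : WithLp 2 (H × H) →ₗ[ℂ] H × H :=
    ((-(LinearMap.snd ℂ H H)).prod (LinearMap.fst ℂ H H)).comp eL.toLinearMap
  have hLapp : ∀ q : WithLp 2 (H × H), L q = (-(eL q).2, (eL q).1) := fun q => rfl
  have hLcont : Continuous L := by
    have h1 : ⇑L = (fun p : H × H => (-p.2, p.1)) ∘ ⇑(WithLp.prodContinuousLinearEquiv 2 ℂ H H) :=
      rfl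
    rw [h1]
    exact (continuous_snd.neg.prodMk continuous_fst).comp
      (WithLp.prodContinuousLinearEquiv 2 ℂ H H).continuous
  set G' : Submodule ℂ (WithLp 2 (H × H)) := R.graph.comap L with hG'def
  have hG'c : IsClosed (G' : Set (WithLp 2 (H × H))) := by
    have h1 : (G' : Set (WithLp 2 (H × H))) = ⇑L ⁻¹' (R.graph : Set (H × H)) := rfl
    rw [h1, graph_restrict hVW]
    exact hClosed.preimage hLcont
  -- inner products in the product space
  have hinner : ∀ q p : WithLp 2 (H × H),
      ⟪q, p⟫ = ⟪(eL q).1, (eL p).1⟫ + ⟪(eL q).2, (eL p).2⟫ := fun q p => rfl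
  -- characterisation of the orthogonal complement of G' as the graph of R†
  have hO : ∀ q : WithLp 2 (H × H), q ∈ G'ᗮ ↔
      ∃ h : (eL q).1 ∈ (R†).domain, (R† ⟨(eL q).1, h⟩ : H) = (eL q).2 := by
    intro q
    rw [Submodule.mem_orthogonal]
    constructor
    · intro hq
      have hx₀ : ∀ x : R.domain, ⟪((eL q).2 : H), (x : H)⟫ = ⟪(eL q).1, R x⟫ := by
        intro x
        have hmem : eL.symm (R x, -(x : H)) ∈ G' := by
          show L (eL.symm (R x, -(x : H))) ∈ R.graph
          rw [hLapp]
          simp only [LinearEquiv.apply_symm_apply]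
          rw [neg_neg]
          exact R.mem_graph x
        have h0 := hq _ hmem
        rw [hinner] at h0
        simp only [LinearEquiv.apply_symm_apply] at h0
        have h0' : ⟪(R x : H), (eL q).1⟫ + ⟪-(x : H), (eL q).2⟫ = 0 := h0
        rw [inner_neg_left] at h0'
        have h1 : ⟪(R x : H), (eL q).1⟫ = ⟪(x : H), (eL q).2⟫ := by
          have h2 : ⟪(R x : H), (eL q).1⟫ - ⟪(x : H), (eL q).2⟫ = 0 := by
            linear_combination h0'
          exact sub_eq_zero.mp h2
        rw [← inner_conj_symm, ← h1, inner_conj_symm]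
      have hmem' : (eL q).1 ∈ (R†).domain :=
        mem_adjoint_domain_of_exists _ ⟨(eL q).2, hx₀⟩
      exact ⟨hmem', adjoint_apply_eq hdV ⟨(eL q).1, hmem'⟩ hx₀⟩
    · rintro ⟨h, hval⟩ g hg
      have hg' : L g ∈ R.graph := hg
      rw [mem_graph_iff] at hg'
      obtain ⟨x, hx1, hx2⟩ := hg'
      rw [hLapp] at hx1 hx2
      simp only at hx1 hx2
      have hg1 : (eL g).1 = R x := hx2.symm
      have hg2 : (eL g).2 = -(x : H) := by
        have h3 := congrArg Neg.neg hx1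
        rw [neg_neg] at h3
        exact h3.symm
      rw [hinner, hg1, hg2, inner_neg_left, ← hval]
      have hfa := adjoint_isFormalAdjoint hdV (T := R) ⟨(eL q).1, h⟩ x
      rw [← inner_conj_symm ((R x : H)) ((eL q).1), ← hfa, inner_conj_symm]
      ring
  ext u
  constructor
  · -- easy direction: V ⊆ bdryPerp Vt
    intro huV
    have huA : u ∈ (Tt†).domain := hVW huV
    have huB : u ∈ (T†).domain := by rw [← hdom]; exact huA
    refine ⟨huA, ?_⟩
    intro v w hvw hvVt
    have hv' : (v : H) ∈ (T†).domain := by rw [← hdom]; exact v.2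
    have hTw : T† w = T† ⟨(v : H), hv'⟩ := by
      congr 1
      exact Subtype.ext hvw.symm
    rw [hTw]
    have hvB : (v : H) ∈ bdryPerp (Tt†) (T†) (V : Set H) := by rw [← hVt]; exact hvVt
    obtain ⟨hvA, hvcond⟩ := hvB
    have h0 := hvcond ⟨u, huA⟩ ⟨u, huB⟩ rfl huV
    have h0' : ⟪(Tt† v : H), u⟫ - ⟪(v : H), (T† ⟨u, huB⟩ : H)⟫ = 0 := h0
    have h1 : ⟪u, (Tt† v : H)⟫ - ⟪(T† ⟨u, huB⟩ : H), (v : H)⟫ = 0 := by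
      have h2 := congrArg (starRingEnd ℂ) h0'
      simpa [_root_.map_sub, inner_conj_symm] using h2
    have hkey := keyE hF u (v : H) huA huB v.2 hv'
    rw [hkey]
    exact h1
  · -- hard direction: bdryPerp Vt ⊆ V
    rintro ⟨huA, hcond⟩
    set q0 : WithLp 2 (H × H) := eL.symm ((Tt† ⟨u, huA⟩ : H), -u) with hq0def
    have hq0 : q0 ∈ G'ᗮᗮ := by
      rw [Submodule.mem_orthogonal]
      intro p hp
      obtain ⟨hp1, hp2⟩ := (hO p).mp hp
      have hyVt : (eL p).1 ∈ Vt := by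
        rw [← SetLike.mem_coe, hVtR]
        exact hp1
      have hyB : (eL p).1 ∈ (T†).domain := hVtW hyVt
      have hyA : (eL p).1 ∈ (Tt†).domain := by rw [hdom]; exact hyB
      have h0 := hcond ⟨(eL p).1, hyA⟩ ⟨(eL p).1, hyB⟩ rfl hyVt
      obtain ⟨hyB', hRT, _⟩ := adj_char hF V hV₀ hVW ((eL p).1) hp1
      have hRT' : (R† ⟨(eL p).1, hp1⟩ : H) = T† ⟨(eL p).1, hyB⟩ := hRT
      have hcalc : ⟪p, q0⟫ =
          ⟪(eL p).1, (Tt† ⟨u, huA⟩ : H)⟫ - ⟪(T† ⟨(eL p).1, hyB⟩ : H), u⟫ := by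
        rw [hinner]
        simp only [hq0def, LinearEquiv.apply_symm_apply]
        rw [← hp2, hRT', inner_neg_right]
        ring
      rw [hcalc]
      have h2 := congrArg (starRingEnd ℂ) h0
      simpa [_root_.map_sub, inner_conj_symm] using h2
    have hGc : G'ᗮᗮ = G' := by
      rw [Submodule.orthogonal_orthogonal_eq_closure]
      exact hG'c.submodule_topologicalClosure_eq
    rw [hGc] at hq0
    have hq0' : L q0 ∈ R.graph := hq0
    rw [hLapp] at hq0'
    simp only [hq0def, LinearEquiv.apply_symm_apply] at hq0'
    rw [neg_neg] at hq0'
    exact (mem_domain_of_mem_graph hq0').1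

end Statement4Aux

namespace Statement4Aux

variable {T Tt : H →ₗ.[ℂ] H}

lemma bdry_symm (hF : IsPreFriedrichsPair T Tt) (s : Set H) :
    bdryPerp (Tt†) (T†) s = bdryPerp (T†) (Tt†) s :=
  Set.Subset.antisymm (bdry_symm_le hF s) (bdry_symm_le hF.symm s)

end Statement4Aux


/-- Let `(T₀, T̃₀)` be a pair of closed densely defined operators satisfying
(T1)–(T2), and let `V, Ṽ` be subspaces of the graph space `W` containing `W₀ = dom T₀ = dom T̃₀`.
Then `(T₁|_V)* = T̃₁|_Ṽ ↔ Ṽ = V^{[⊥]}` and `(T̃₁|_Ṽ)* = T₁|_V ↔ V = Ṽ^{[⊥]}`; and if `V` is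
closed in `W`, the single condition `Ṽ = V^{[⊥]}` implies that `T₁|_V` and `T̃₁|_Ṽ` are
mutually adjoint. -/
theorem statement4 (T Tt : H →ₗ.[ℂ] H) (hF : IsPreFriedrichsPair T Tt)
    (hT : T.IsClosed) (hTt : Tt.IsClosed)
    (V Vt : Submodule ℂ H)
    (hV₀ : T.domain ≤ V) (hVW : V ≤ (Tt†).domain)
    (hVt₀ : Tt.domain ≤ Vt) (hVtW : Vt ≤ (T†).domain) :
    ((((Tt†).domRestrict V)† = (T†).domRestrict Vt) ↔
        (Vt : Set H) = bdryPerp (Tt†) (T†) (V : Set H)) ∧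
    ((((T†).domRestrict Vt)† = (Tt†).domRestrict V) ↔
        (V : Set H) = bdryPerp (Tt†) (T†) (Vt : Set H)) ∧
    (IsClosed {p : H × H | p.1 ∈ V ∧ p ∈ (Tt†).graph} →
      (Vt : Set H) = bdryPerp (Tt†) (T†) (V : Set H) →
      (((Tt†).domRestrict V)† = (T†).domRestrict Vt ∧
        ((T†).domRestrict Vt)† = (Tt†).domRestrict V)) := by
  have g1 := Statement4Aux.core hF V Vt hV₀ hVW hVtW
  have g2 := Statement4Aux.core hF.symm Vt V hVt₀ hVtW hVW
  rw [Statement4Aux.bdry_symm hF.symm (Vt : Set H)] at g2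
  refine ⟨g1, g2, fun hClosed hVt => ?_⟩
  exact ⟨g1.mpr hVt,
    g2.mpr (Statement4Aux.closed_refl hF V Vt hV₀ hVW hVtW hClosed hVt)⟩
end
end

section
/- Let (T₀, T̃₀) be a joint pair of closed abstract Friedrichs operators on a complex Hilbert space H, and let (T₁|_V, T̃₁|_Ṽ) be a pair of mutually adjoint realisations relative to (T₀, T̃₀). If the pair (V, Ṽ) has definite sign with respect to the boundary form, i.e. [u | u] ≥ 0 for all u ∈ V and [v | v] ≤ 0 for all v ∈ Ṽ, then (T₁|_V, T̃₁|_Ṽ) is a pair of mutually adjoint BIJECTIVE realisations relative to (T₀, T̃₀). -/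
open LinearPMap
open scoped LinearPMap

noncomputable section

variable {H : Type*} [NormedAddCommGroup H] [InnerProductSpace ℂ H] [CompleteSpace H]

local notation "⟪" x ", " y "⟫" => @inner ℂ _ _ x y

open scoped ComplexOrder

/-- Transport along an equality of `LinearPMap`s. -/
private lemma pmapEq {P Q : H →ₗ.[ℂ] H} (h : P = Q) {x : H} (hx : x ∈ P.domain) :
    ∃ hx' : x ∈ Q.domain, P ⟨x, hx⟩ = Q ⟨x, hx'⟩ := by subst h; exact ⟨hx, rfl⟩

private lemma reSymm (x y : H) : (⟪x, y⟫).re = (⟪y, x⟫).re := by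
  rw [← inner_conj_symm x y, Complex.conj_re]

/-- Abstract bijectivity criterion: a mutually adjoint pair of densely defined
coercive operators consists of bijections. -/
private lemma main_aux (A B : H →ₗ.[ℂ] H) (hAd : Dense (A.domain : Set H))
    (hBd : Dense (B.domain : Set H)) (hadjA : A† = B) (hadjB : B† = A)
    {μ₀ : ℝ} (hμ : 0 < μ₀)
    (hcA : ∀ x : A.domain, μ₀ * ‖(x : H)‖ ≤ ‖A x‖)
    (hcB : ∀ x : B.domain, μ₀ * ‖(x : H)‖ ≤ ‖B x‖) :
    Function.Bijective (fun x : A.domain => A x) := by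
  constructor
  · intro x y hxy
    have h0 : A (x - y) = 0 := by
      rw [A.map_sub, show A x = A y from hxy, sub_self]
    have h1 := hcA (x - y)
    rw [h0, norm_zero] at h1
    have h2 : ‖((x - y : A.domain) : H)‖ = 0 :=
      le_antisymm (by nlinarith [norm_nonneg ((x - y : A.domain) : H)]) (norm_nonneg _)
    have h3 : ((x : H) - (y : H)) = 0 := by
      rw [← norm_eq_zero]
      simpa using h2
    exact Subtype.ext (sub_eq_zero.mp h3)
  · intro y
    set R : Submodule ℂ H := LinearMap.range A.toFun with hR
    have hRperp : Rᗮ = ⊥ := by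
      rw [Submodule.eq_bot_iff]
      intro z hz
      have hz' : ∀ x : A.domain, ⟪(0 : H), (x : H)⟫ = ⟪z, A x⟫ := by
        intro x
        have h := (Submodule.mem_orthogonal R z).mp hz (A x) (LinearMap.mem_range.mpr ⟨x, rfl⟩)
        rw [inner_zero_left, ← inner_conj_symm, h]
        simp
      have hmem : z ∈ (A†).domain := mem_adjoint_domain_of_exists _ ⟨0, hz'⟩
      have hval : (A†) ⟨z, hmem⟩ = 0 := adjoint_apply_eq hAd _ hz'
      obtain ⟨hmem', heq⟩ := pmapEq hadjA hmem
      rw [heq] at hval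
      have h1 := hcB ⟨z, hmem'⟩
      rw [hval, norm_zero] at h1
      have : ‖z‖ = 0 := le_antisymm (by nlinarith [norm_nonneg z]) (norm_nonneg z)
      simpa [norm_eq_zero] using this
    have hRdense : Dense (R : Set H) :=
      Submodule.dense_iff_topologicalClosure_eq_top.mpr
        (Submodule.topologicalClosure_eq_top_iff.mpr hRperp)
    obtain ⟨s, hs, hlim⟩ := mem_closure_iff_seq_limit.mp (hRdense y)
    choose u hu using fun n => LinearMap.mem_range.mp (hs n)
    have hAu : ∀ n, A (u n) = s n := hu
    have hCauchyS : CauchySeq s := hlim.cauchySeq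
    have hCauchyU : CauchySeq (fun n => ((u n : H))) := by
      rw [Metric.cauchySeq_iff] at hCauchyS ⊢
      intro ε hε
      obtain ⟨N, hN⟩ := hCauchyS (μ₀ * ε) (by positivity)
      refine ⟨N, fun m hm n hn => ?_⟩
      have h1 := hcA (u m - u n)
      rw [A.map_sub, hAu, hAu] at h1
      have h2 : dist ((u m : H)) ((u n : H)) = ‖((u m - u n : A.domain) : H)‖ := by
        rw [dist_eq_norm]
        norm_cast
      have h3 : ‖s m - s n‖ = dist (s m) (s n) := (dist_eq_norm _ _).symm
      have h4 : μ₀ * dist ((u m : H)) ((u n : H)) < μ₀ * ε := by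
        rw [h2]
        calc μ₀ * ‖((u m - u n : A.domain) : H)‖ ≤ ‖s m - s n‖ := h1
          _ = dist (s m) (s n) := h3
          _ < μ₀ * ε := hN m hm n hn
      exact (mul_lt_mul_iff_right₀ hμ).mp h4
    obtain ⟨w, hw⟩ := cauchySeq_tendsto_of_complete hCauchyU
    have hform : A.IsFormalAdjoint B := hadjB ▸ adjoint_isFormalAdjoint hBd
    have hkey : ∀ x : B.domain, ⟪(y : H), (x : H)⟫ = ⟪w, B x⟫ := by
      intro x
      have h1 : Filter.Tendsto (fun n => ⟪s n, (x : H)⟫) Filter.atTop (nhds ⟪y, (x : H)⟫) :=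
        hlim.inner tendsto_const_nhds
      have h2 : Filter.Tendsto (fun n => ⟪s n, (x : H)⟫) Filter.atTop (nhds ⟪w, B x⟫) := by
        have h3 : ∀ n, ⟪s n, (x : H)⟫ = ⟪((u n : H)), B x⟫ := by
          intro n
          rw [← hAu n]
          exact hform (u n) x
        simp only [h3]
        exact hw.inner tendsto_const_nhds
      exact tendsto_nhds_unique h1 h2
    have hmem : w ∈ (B†).domain := mem_adjoint_domain_of_exists _ ⟨y, hkey⟩
    have hval : (B†) ⟨w, hmem⟩ = y := adjoint_apply_eq hBd _ hkey
    obtain ⟨hmem', heq⟩ := pmapEq hadjB hmem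
    exact ⟨⟨w, hmem'⟩, by show A ⟨w, hmem'⟩ = y; rw [← heq]; exact hval⟩

/-- The key lemma: membership in the adjoint domain transfers between the pair,
with the explicit formula involving the bounded extension `C` of `T + Tt`. -/
private lemma genKey (T Tt : H →ₗ.[ℂ] H) (hdT : Dense (T.domain : Set H))
    (hdTt : Dense (Tt.domain : Set H))
    (hdom : ∀ x : H, x ∈ Tt.domain → x ∈ T.domain)
    (ht1 : ∀ (φ : T.domain) (ψ : Tt.domain), ⟪T φ, (ψ : H)⟫ = ⟪(φ : H), Tt ψ⟫)
    (C : H →L[ℂ] H) (hCsym : ∀ x y : H, ⟪C x, y⟫ = ⟪x, C y⟫)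
    (hCext : ∀ (φ : T.domain) (ψ : Tt.domain), (φ : H) = (ψ : H) → C (φ : H) = T φ + Tt ψ)
    (y : (T†).domain) :
    ∃ hy : (y : H) ∈ (Tt†).domain, (Tt†) ⟨(y : H), hy⟩ = C (y : H) - (T†) y := by
  have hw : ∀ x : Tt.domain, ⟪C (y : H) - (T†) y, (x : H)⟫ = ⟪(y : H), Tt x⟫ := by
    intro x
    have hx' : (x : H) ∈ T.domain := hdom x x.2
    have hC : C ((x : H)) = T ⟨x, hx'⟩ + Tt x := hCext ⟨x, hx'⟩ x rfl
    have hTad : ⟪(T†) y, ((⟨(x : H), hx'⟩ : T.domain) : H)⟫ = ⟪(y : H), T ⟨x, hx'⟩⟫ :=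
      adjoint_isFormalAdjoint hdT y ⟨x, hx'⟩
    rw [inner_sub_left, hCsym, hC, inner_add_right,
      show ⟪(T†) y, (x : H)⟫ = ⟪(y : H), T ⟨(x : H), hx'⟩⟫ from hTad]
    ring
  have hmem : (y : H) ∈ (Tt†).domain := mem_adjoint_domain_of_exists _ ⟨_, hw⟩
  exact ⟨hmem, adjoint_apply_eq hdTt ⟨(y : H), hmem⟩ hw⟩

/-- Existence of the bounded symmetric coercive extension `C` of `T + Tt`. -/
private lemma exists_C (T Tt : H →ₗ.[ℂ] H) (hF : IsFriedrichsPair T Tt) :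
    ∃ (C : H →L[ℂ] H) (μ₀ : ℝ), 0 < μ₀ ∧
      (∀ (φ : T.domain) (ψ : Tt.domain), (φ : H) = (ψ : H) → C (φ : H) = T φ + Tt ψ) ∧
      (∀ x y : H, ⟪C x, y⟫ = ⟪x, C y⟫) ∧
      (∀ x : H, 2 * μ₀ * ‖x‖ ^ 2 ≤ (⟪C x, x⟫).re) := by
  obtain ⟨c, hc, ht2⟩ := hF.t2
  obtain ⟨μ₀, hμ, ht3⟩ := hF.t3
  have hPdom : (T + Tt).domain = T.domain := by
    rw [add_domain, ← hF.dom_eq, inf_idem]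
  have hPdense : Dense (((T + Tt).domain : Submodule ℂ H) : Set H) := by
    rw [hPdom]; exact hF.dense'
  set f : (T + Tt).domain →L[ℂ] H :=
    LinearMap.mkContinuous (T + Tt).toFun c (fun x => by simpa using ht2 x) with hf
  set C : H →L[ℂ] H :=
    f.extend (Submodule.subtypeL (T + Tt).domain) with hCdef
  have hCP : ∀ x : (T + Tt).domain, C (x : H) = (T + Tt) x := by
    intro x
    have := ContinuousLinearMap.extend_eq (e := Submodule.subtypeL (T + Tt).domain) f
      hPdense.denseRange_val isUniformEmbedding_subtype_val.isUniformInducing x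
    exact this
  -- extension property
  have hCext : ∀ (φ : T.domain) (ψ : Tt.domain), (φ : H) = (ψ : H) →
      C (φ : H) = T φ + Tt ψ := by
    intro φ ψ hφψ
    have hmem : (φ : H) ∈ (T + Tt).domain := by rw [hPdom]; exact φ.2
    have h1 := hCP ⟨(φ : H), hmem⟩
    rw [h1, LinearPMap.add_apply]
    congr 1
    exact congrArg _ (Subtype.ext hφψ)
  -- symmetry on the dense domain
  have hsym0 : ∀ (φ ψ : (T + Tt).domain), ⟪C (φ : H), (ψ : H)⟫ = ⟪(φ : H), C (ψ : H)⟫ := by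
    intro φ ψ
    rw [hCP φ, hCP ψ, LinearPMap.add_apply, LinearPMap.add_apply]
    have hφT : (φ : H) ∈ T.domain := φ.2.1
    have hφTt : (φ : H) ∈ Tt.domain := φ.2.2
    have hψT : (ψ : H) ∈ T.domain := ψ.2.1
    have hψTt : (ψ : H) ∈ Tt.domain := ψ.2.2
    have e1 : ⟪T ⟨(φ : H), hφT⟩, (ψ : H)⟫ = ⟪(φ : H), Tt ⟨(ψ : H), hψTt⟩⟫ :=
      hF.t1 ⟨(φ : H), hφT⟩ ⟨(ψ : H), hψTt⟩
    have e2 : ⟪Tt ⟨(φ : H), hφTt⟩, (ψ : H)⟫ = ⟪(φ : H), T ⟨(ψ : H), hψT⟩⟫ := by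
      rw [← inner_conj_symm, ← hF.t1 ⟨(ψ : H), hψT⟩ ⟨(φ : H), hφTt⟩, inner_conj_symm]
    rw [inner_add_left, inner_add_right, e1, e2]
    ring
  have hCsym : ∀ x y : H, ⟪C x, y⟫ = ⟪x, C y⟫ := by
    have step1 : ∀ φ : (T + Tt).domain, ∀ y : H, ⟪C (φ : H), y⟫ = ⟪(φ : H), C y⟫ := by
      intro φ
      have hfun : (fun y : H => ⟪C (φ : H), y⟫) = fun y : H => ⟪(φ : H), C y⟫ := by
        refine Continuous.ext_on hPdense ?_ ?_ ?_
        · exact Continuous.inner continuous_const continuous_id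
        · exact Continuous.inner continuous_const C.continuous
        · intro y hy
          exact hsym0 φ ⟨y, hy⟩
      exact fun y => congrFun hfun y
    intro x y
    have hfun : (fun x : H => ⟪C x, y⟫) = fun x : H => ⟪x, C y⟫ := by
      refine Continuous.ext_on hPdense ?_ ?_ ?_
      · exact Continuous.inner (C.continuous) continuous_const
      · exact Continuous.inner continuous_id continuous_const
      · intro x hx
        exact step1 ⟨x, hx⟩ y
    exact congrFun hfun x
  -- coercivity
  have hCcoer : ∀ x : H, 2 * μ₀ * ‖x‖ ^ 2 ≤ (⟪C x, x⟫).re := by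
    have hclosed : IsClosed {x : H | 2 * μ₀ * ‖x‖ ^ 2 ≤ (⟪C x, x⟫).re} := by
      apply isClosed_le
      · fun_prop
      · exact (Complex.continuous_re).comp (Continuous.inner C.continuous continuous_id)
    have hsub : (((T + Tt).domain : Submodule ℂ H) : Set H) ⊆
        {x : H | 2 * μ₀ * ‖x‖ ^ 2 ≤ (⟪C x, x⟫).re} := by
      intro x hx
      have := ht3 ⟨x, hx⟩
      simpa [hCP ⟨x, hx⟩] using this
    intro x
    have : x ∈ closure (((T + Tt).domain : Submodule ℂ H) : Set H) := hPdense x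
    exact (closure_minimal hsub hclosed) this
  exact ⟨C, μ₀, hμ, hCext, hCsym, hCcoer⟩

/-- Let `(T₀, T̃₀)` be a joint pair of closed abstract Friedrichs operators and
let `(T₁|_V, T̃₁|_Ṽ)` be a pair of mutually adjoint realisations relative to it. If the pair
`(V, Ṽ)` has definite sign with respect to the boundary form, i.e. `[u | u] ≥ 0` on `V` and
`[v | v] ≤ 0` on `Ṽ`, then both `T₁|_V` and `T̃₁|_Ṽ` are bijections onto `H`, i.e.
`(T₁|_V, T̃₁|_Ṽ)` is a pair of mutually adjoint bijective realisations. -/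
theorem statement6 (T Tt : H →ₗ.[ℂ] H) (hF : IsFriedrichsPair T Tt)
    (hT : T.IsClosed) (hTt : Tt.IsClosed)
    (V Vt : Submodule ℂ H)
    (hV₀ : T.domain ≤ V) (hVW : V ≤ (Tt†).domain)
    (hVt₀ : Tt.domain ≤ Vt) (hVtW : Vt ≤ (T†).domain)
    (hadj₁ : ((Tt†).domRestrict V)† = (T†).domRestrict Vt)
    (hadj₂ : ((T†).domRestrict Vt)† = (Tt†).domRestrict V)
    (hsign₁ : ∀ (u₁ : (Tt†).domain) (u₂ : (T†).domain), (u₁ : H) = (u₂ : H) →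
      (u₁ : H) ∈ V → 0 ≤ ⟪(Tt†) u₁, (u₁ : H)⟫ - ⟪(u₁ : H), (T†) u₂⟫)
    (hsign₂ : ∀ (v₁ : (Tt†).domain) (v₂ : (T†).domain), (v₁ : H) = (v₂ : H) →
      (v₁ : H) ∈ Vt → ⟪(Tt†) v₁, (v₁ : H)⟫ - ⟪(v₁ : H), (T†) v₂⟫ ≤ 0) :
    Function.Bijective (fun x : ((Tt†).domRestrict V).domain => ((Tt†).domRestrict V) x) ∧
    Function.Bijective (fun x : ((T†).domRestrict Vt).domain => ((T†).domRestrict Vt) x) := by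
  obtain ⟨C, μ₀, hμ, hCext, hCsym, hCcoer⟩ := exists_C T Tt hF
  have hdT : Dense (T.domain : Set H) := hF.dense'
  have hdTt : Dense (Tt.domain : Set H) := by rw [← hF.dom_eq]; exact hdT
  have ht1 := hF.t1
  have ht1' : ∀ (ψ : Tt.domain) (φ : T.domain), ⟪Tt ψ, (φ : H)⟫ = ⟪(ψ : H), T φ⟫ := by
    intro ψ φ
    rw [← inner_conj_symm, ← ht1 φ ψ, inner_conj_symm]
  have hCext' : ∀ (ψ : Tt.domain) (φ : T.domain), (ψ : H) = (φ : H) →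
      C (ψ : H) = Tt ψ + T φ := by
    intro ψ φ h
    rw [h, hCext φ ψ h.symm, add_comm]
  have hdom₁ : ∀ x : H, x ∈ Tt.domain → x ∈ T.domain := fun x hx => by
    rw [hF.dom_eq]; exact hx
  have hdom₂ : ∀ x : H, x ∈ T.domain → x ∈ Tt.domain := fun x hx => by
    rw [← hF.dom_eq]; exact hx
  have key1 := fun y => genKey T Tt hdT hdTt hdom₁ ht1 C hCsym hCext y
  have key2 := fun y => genKey Tt T hdTt hdT hdom₂ ht1' C hCsym hCext' y
  set A : H →ₗ.[ℂ] H := (Tt†).domRestrict V with hA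
  set B : H →ₗ.[ℂ] H := (T†).domRestrict Vt with hB
  -- density of domains
  have hT0sub : T.domain ≤ (Tt†).domain := by
    intro x hx
    exact mem_adjoint_domain_of_exists _ ⟨T ⟨x, hx⟩, fun ψ => ht1 ⟨x, hx⟩ ψ⟩
  have hTt0sub : Tt.domain ≤ (T†).domain := by
    intro x hx
    exact mem_adjoint_domain_of_exists _ ⟨Tt ⟨x, hx⟩, fun φ => ht1' ⟨x, hx⟩ φ⟩
  have hAdense : Dense (A.domain : Set H) := by
    apply hdT.mono
    intro x hx
    exact ⟨hV₀ hx, hT0sub hx⟩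
  have hBdense : Dense (B.domain : Set H) := by
    apply hdTt.mono
    intro x hx
    exact ⟨hVt₀ hx, hTt0sub hx⟩
  -- coercivity of A
  have hcA : ∀ u : A.domain, μ₀ * ‖(u : H)‖ ≤ ‖A u‖ := by
    intro u
    have huV : (u : H) ∈ V := u.2.1
    have hu1 : (u : H) ∈ (Tt†).domain := u.2.2
    obtain ⟨hu2, hform⟩ := key2 ⟨(u : H), hu1⟩
    have hsgn := hsign₁ ⟨(u : H), hu1⟩ ⟨(u : H), hu2⟩ rfl huV
    have hre : 0 ≤ (⟪(Tt†) ⟨(u : H), hu1⟩, (u : H)⟫ - ⟪(u : H), (T†) ⟨(u : H), hu2⟩⟫).re := by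
      have := (Complex.le_def.mp hsgn).1
      simpa using this
    rw [show (T†) ⟨(u : H), hu2⟩ = C (u : H) - (Tt†) ⟨(u : H), hu1⟩ from hform] at hre
    set a : ℂ := ⟪(Tt†) ⟨(u : H), hu1⟩, (u : H)⟫ with ha
    have h2 : ⟪(u : H), C (u : H) - (Tt†) ⟨(u : H), hu1⟩⟫
        = ⟪(u : H), C (u : H)⟫ - ⟪(u : H), (Tt†) ⟨(u : H), hu1⟩⟫ := inner_sub_right _ _ _
    rw [h2] at hre
    have h3 : (⟪(u : H), C (u : H)⟫).re = (⟪C (u : H), (u : H)⟫).re := reSymm _ _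
    have h4 : (⟪(u : H), (Tt†) ⟨(u : H), hu1⟩⟫).re = a.re := by
      rw [ha]; exact reSymm _ _
    have hre' : (⟪C (u : H), (u : H)⟫).re ≤ 2 * a.re := by
      simp only [Complex.sub_re] at hre
      rw [h3] at hre
      linarith [hre, h4]
    have hcoerU := hCcoer (u : H)
    have hmain : μ₀ * ‖(u : H)‖ ^ 2 ≤ a.re := by linarith
    have h5 : a.re ≤ ‖(Tt†) ⟨(u : H), hu1⟩‖ * ‖(u : H)‖ := by
      calc a.re ≤ ‖a‖ := Complex.re_le_norm a
        _ = ‖a‖ := rfl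
        _ ≤ ‖(Tt†) ⟨(u : H), hu1⟩‖ * ‖(u : H)‖ := norm_inner_le_norm _ _
    have hAu : A u = (Tt†) ⟨(u : H), hu1⟩ := domRestrict_apply rfl
    rw [hAu]
    rcases eq_or_lt_of_le (norm_nonneg ((u : H))) with h | h
    · rw [← h]; simp [norm_nonneg]
    · nlinarith
  -- coercivity of B
  have hcB : ∀ v : B.domain, μ₀ * ‖(v : H)‖ ≤ ‖B v‖ := by
    intro v
    have hvVt : (v : H) ∈ Vt := v.2.1
    have hv2 : (v : H) ∈ (T†).domain := v.2.2
    obtain ⟨hv1, hform⟩ := key1 ⟨(v : H), hv2⟩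
    have hsgn := hsign₂ ⟨(v : H), hv1⟩ ⟨(v : H), hv2⟩ rfl hvVt
    have hre : (⟪(Tt†) ⟨(v : H), hv1⟩, (v : H)⟫ - ⟪(v : H), (T†) ⟨(v : H), hv2⟩⟫).re ≤ 0 := by
      have := (Complex.le_def.mp hsgn).1
      simpa using this
    rw [show (Tt†) ⟨(v : H), hv1⟩ = C (v : H) - (T†) ⟨(v : H), hv2⟩ from hform] at hre
    set b : ℂ := ⟪(T†) ⟨(v : H), hv2⟩, (v : H)⟫ with hb
    have h2 : ⟪C (v : H) - (T†) ⟨(v : H), hv2⟩, (v : H)⟫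
        = ⟪C (v : H), (v : H)⟫ - ⟪(T†) ⟨(v : H), hv2⟩, (v : H)⟫ := inner_sub_left _ _ _
    rw [h2] at hre
    have h4 : (⟪(v : H), (T†) ⟨(v : H), hv2⟩⟫).re = b.re := by
      rw [hb]; exact reSymm _ _
    have hre' : (⟪C (v : H), (v : H)⟫).re ≤ 2 * b.re := by
      simp only [Complex.sub_re] at hre
      linarith [hre, h4]
    have hcoerV := hCcoer (v : H)
    have hmain : μ₀ * ‖(v : H)‖ ^ 2 ≤ b.re := by linarith
    have h5 : b.re ≤ ‖(T†) ⟨(v : H), hv2⟩‖ * ‖(v : H)‖ := by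
      calc b.re ≤ ‖b‖ := Complex.re_le_norm b
        _ = ‖b‖ := rfl
        _ ≤ ‖(T†) ⟨(v : H), hv2⟩‖ * ‖(v : H)‖ := norm_inner_le_norm _ _
    have hBv : B v = (T†) ⟨(v : H), hv2⟩ := domRestrict_apply rfl
    rw [hBv]
    rcases eq_or_lt_of_le (norm_nonneg ((v : H))) with h | h
    · rw [← h]; simp [norm_nonneg]
    · nlinarith
  exact ⟨main_aux A B hAdense hBdense hadj₁ hadj₂ hμ hcA hcB,
    main_aux B A hBdense hAdense hadj₂ hadj₁ hμ hcB hcA⟩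
end
end
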